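/- Let F be a family of closed balls in the plane, each of positive radius, with the property that among every countably infinite subfamily of F, some 3 balls can be pierced by one line. Then F can be pierced by finitely many lines. -/

import Mathlib

/-- A line in the plane: a nonempty affine subspace of dimension 1. -/
def IsLine (L : AffineSubspace ℝ (EuclideanSpace ℝ (Fin 2))) : Prop :=
  (L : Set (EuclideanSpace ℝ (Fin 2))).Nonempty ∧ Module.finrank ℝ L.direction = 1

set_option maxHeartbeats 2000000

noncomputable section
open Metric Set

abbrev Pl := EuclideanSpace ℝ (Fin 2)
abbrev Memb := Pl × ℝ

def Pierces (L : AffineSubspace ℝ Pl) (m : Memb) : Prop :=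
  (Metric.closedBall m.1 m.2 ∩ (L : Set Pl)).Nonempty

def SmallF (X : Set Memb) : Prop :=
  ∃ P : Set (AffineSubspace ℝ Pl), P.Finite ∧ (∀ L ∈ P, IsLine L) ∧
    ∀ b ∈ X, ∃ L ∈ P, Pierces L b

def lineNQ (n : Pl) (q : ℝ) : AffineSubspace ℝ Pl :=
  AffineSubspace.mk' (q • n) (LinearMap.ker ((innerSL ℝ n) : Pl →ₗ[ℝ] ℝ))

lemma mem_lineNQ (n : Pl) (hn : ‖n‖ = 1) (q : ℝ) (x : Pl) :
    x ∈ lineNQ n q ↔ inner ℝ x n = (q:ℝ) := by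
  rw [lineNQ, AffineSubspace.mem_mk']
  simp only [vsub_eq_sub, LinearMap.mem_ker, ContinuousLinearMap.coe_coe]
  rw [show ((innerSL ℝ n) (x - q • n) : ℝ) = inner ℝ n (x - q • n) from rfl]
  rw [inner_sub_right, real_inner_smul_right, real_inner_self_eq_norm_sq, hn]
  rw [real_inner_comm]
  constructor <;> intro h <;> nlinarith

lemma isLine_lineNQ (n : Pl) (hn : ‖n‖ = 1) (q : ℝ) : IsLine (lineNQ n q) := by
  have hn0 : n ≠ 0 := by intro h; rw [h, norm_zero] at hn; norm_num at hn
  constructor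
  · exact ⟨q • n, AffineSubspace.self_mem_mk' _ _⟩
  · rw [lineNQ, AffineSubspace.direction_mk']
    have hsurj : LinearMap.range ((innerSL ℝ n) : Pl →ₗ[ℝ] ℝ) = ⊤ := by
      rw [LinearMap.range_eq_top]
      intro c
      refine ⟨c • n, ?_⟩
      show (inner ℝ n (c • n) : ℝ) = c
      rw [real_inner_smul_right, real_inner_self_eq_norm_sq, hn]; ring
    have h2 : Module.finrank ℝ Pl = 2 := by
      simp [finrank_euclideanSpace]
    have := LinearMap.finrank_range_add_finrank_ker ((innerSL ℝ n) : Pl →ₗ[ℝ] ℝ)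
    rw [hsurj, h2] at this
    rw [show Module.finrank ℝ (⊤ : Submodule ℝ ℝ) = 1 by simp] at this
    have h3 : Module.finrank ℝ (LinearMap.ker ((innerSL ℝ n) : Pl →ₗ[ℝ] ℝ)) = 1 := by omega
    exact h3

lemma pierces_lineNQ (n : Pl) (hn : ‖n‖ = 1) (q : ℝ) (m : Memb)
    (h : |inner ℝ m.1 n - q| ≤ m.2) : Pierces (lineNQ n q) m := by
  refine ⟨m.1 - ((inner ℝ m.1 n : ℝ) - q) • n, ?_, ?_⟩
  · rw [Metric.mem_closedBall, dist_eq_norm]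
    rw [show m.1 - ((inner ℝ m.1 n:ℝ) - q) • n - m.1 = -(((inner ℝ m.1 n : ℝ) - q) • n) by abel]
    rw [norm_neg, norm_smul, hn, Real.norm_eq_abs]
    simpa using h
  · rw [SetLike.mem_coe, mem_lineNQ n hn]
    rw [inner_sub_left, real_inner_smul_left, real_inner_self_eq_norm_sq, hn]
    ring

lemma smallF_mono {X Y : Set Memb} (h : SmallF Y) (hXY : X ⊆ Y) : SmallF X := by
  obtain ⟨P, hf, hl, hp⟩ := h
  exact ⟨P, hf, hl, fun b hb => hp b (hXY hb)⟩

lemma smallF_empty : SmallF (∅ : Set Memb) := ⟨∅, finite_empty, by simp, by simp⟩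

lemma smallF_union {X Y : Set Memb} (hX : SmallF X) (hY : SmallF Y) : SmallF (X ∪ Y) := by
  obtain ⟨P, hf, hl, hp⟩ := hX
  obtain ⟨Q, qf, ql, qp⟩ := hY
  refine ⟨P ∪ Q, hf.union qf, ?_, ?_⟩
  · rintro L (hL | hL); exacts [hl L hL, ql L hL]
  · rintro b (hb | hb)
    · obtain ⟨L, h1, h2⟩ := hp b hb; exact ⟨L, Or.inl h1, h2⟩
    · obtain ⟨L, h1, h2⟩ := qp b hb; exact ⟨L, Or.inr h1, h2⟩

lemma smallF_biUnion {ι : Type*} {t : Set ι} (ht : t.Finite) {A : ι → Set Memb}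
    (h : ∀ i ∈ t, SmallF (A i)) : SmallF (⋃ i ∈ t, A i) := by
  classical
  revert h
  refine Set.Finite.induction_on _ ht (fun _ => by simpa using smallF_empty) ?_
  intro a s _ _ ih h
  rw [Set.biUnion_insert]
  exact smallF_union (h a (Set.mem_insert _ _))
    (ih fun i hi => h i (Set.mem_insert_of_mem _ hi))

lemma smallF_of_pierce_all {X : Set Memb} (L : AffineSubspace ℝ Pl) (hL : IsLine L)
    (h : ∀ m ∈ X, Pierces L m) : SmallF X :=
  ⟨{L}, finite_singleton _, by simpa using hL, fun b hb => ⟨L, rfl, h b hb⟩⟩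

def unit0 : Pl := EuclideanSpace.single 0 1

lemma norm_unit0 : ‖unit0‖ = 1 := by
  simp [unit0, EuclideanSpace.norm_single]

lemma smallF_finite {X : Set Memb} (hX : X.Finite) (hr : ∀ m ∈ X, 0 ≤ m.2) : SmallF X := by
  refine ⟨(fun m : Memb => lineNQ unit0 (inner ℝ m.1 unit0)) '' X, hX.image _, ?_, ?_⟩
  · rintro L ⟨m, _, rfl⟩; exact isLine_lineNQ _ norm_unit0 _
  · intro b hb
    exact ⟨_, Set.mem_image_of_mem _ hb,
      pierces_lineNQ _ norm_unit0 _ _ (by simpa using hr b hb)⟩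

lemma collinear_det (u v : Pl) {x y z : Pl} (h : Collinear ℝ ({x, y, z} : Set Pl)) :
    (inner ℝ (y - x) v : ℝ) * (inner ℝ (z - y) u : ℝ)
      = (inner ℝ (z - y) v : ℝ) * (inner ℝ (y - x) u : ℝ) := by
  rw [collinear_iff_of_mem (Set.mem_insert x {y, z})] at h
  obtain ⟨w, hw⟩ := h
  obtain ⟨ty, hy⟩ := hw y (by simp)
  obtain ⟨tz, hz⟩ := hw z (by simp)
  have h1 : y - x = ty • w := by rw [hy, vadd_eq_add]; module
  have h2 : z - y = (tz - ty) • w := by rw [hy, hz, vadd_eq_add, vadd_eq_add]; module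
  rw [h1, h2, real_inner_smul_left, real_inner_smul_left, real_inner_smul_left,
    real_inner_smul_left]
  ring

lemma exists_unit_orthogonal (u : Pl) : ∃ v : Pl, ‖v‖ = 1 ∧ (inner ℝ u v : ℝ) = 0 := by
  rcases eq_or_ne u 0 with rfl | hu
  · exact ⟨unit0, norm_unit0, inner_zero_left _⟩
  · have h1 : Module.finrank ℝ (ℝ ∙ u) = 1 := finrank_span_singleton hu
    have h2 : Module.finrank ℝ Pl = 2 := by simp [finrank_euclideanSpace]
    have h3 := Submodule.finrank_add_finrank_orthogonal (K := (ℝ ∙ u))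
    rw [h1, h2] at h3
    have h4 : 0 < Module.finrank ℝ ((ℝ ∙ u)ᗮ) := by omega
    have h5 : 0 < Module.rank ℝ ((ℝ ∙ u)ᗮ) := by
      have := Module.finrank_eq_rank ℝ ((ℝ ∙ u)ᗮ)
      rw [← this]; exact_mod_cast h4
    obtain ⟨v0, hv0, hv0ne⟩ := exists_mem_ne_zero_of_rank_pos h5
    refine ⟨‖v0‖⁻¹ • v0, ?_, ?_⟩
    · rw [norm_smul, norm_inv, norm_norm, inv_mul_cancel₀ (norm_ne_zero_iff.2 hv0ne)]
    · rw [real_inner_smul_right]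
      rw [Submodule.mem_orthogonal_singleton_iff_inner_right.1 hv0]
      ring

lemma exists_net (δ : ℝ) (hδ : 0 < δ) : ∃ N : Set Pl, N.Finite ∧ N.Nonempty ∧
    (∀ n ∈ N, ‖n‖ = 1) ∧ ∀ x : Pl, ∃ n ∈ N, |(inner ℝ x n : ℝ)| ≤ δ * ‖x‖ := by
  classical
  set nsel : Pl → Pl := fun y => Classical.choose (exists_unit_orthogonal y) with hnsel
  have hnselspec : ∀ y, ‖nsel y‖ = 1 ∧ (inner ℝ y (nsel y) : ℝ) = 0 :=
    fun y => Classical.choose_spec (exists_unit_orthogonal y)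
  have hsph : IsCompact (Metric.sphere (0 : Pl) 1) := isCompact_sphere _ _
  have hcover : Metric.sphere (0 : Pl) 1 ⊆ ⋃ y ∈ Metric.sphere (0 : Pl) 1, Metric.ball y δ := by
    intro y hy; exact Set.mem_biUnion hy (Metric.mem_ball_self hδ)
  obtain ⟨t, hts, htf, htc⟩ := hsph.elim_finite_subcover_image (fun y _ => Metric.isOpen_ball) hcover
  have htne : t.Nonempty := by
    by_contra h
    rw [Set.not_nonempty_iff_eq_empty] at h
    have : unit0 ∈ Metric.sphere (0 : Pl) 1 := by simp [norm_unit0]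
    have := htc this
    simp [h] at this
  refine ⟨nsel '' t, htf.image _, htne.image _, ?_, ?_⟩
  · rintro n ⟨y, _, rfl⟩; exact (hnselspec y).1
  · intro x
    rcases eq_or_ne x 0 with rfl | hx
    · obtain ⟨y, hy⟩ := htne
      exact ⟨nsel y, Set.mem_image_of_mem _ hy, by simp⟩
    · have hxn : ‖x‖ ≠ 0 := norm_ne_zero_iff.2 hx
      have hy : ‖x‖⁻¹ • x ∈ Metric.sphere (0 : Pl) 1 := by
        simp [norm_smul, inv_mul_cancel₀ hxn]
      have := htc hy
      simp only [Set.mem_iUnion] at this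
      obtain ⟨y0, hy0t, hy0b⟩ := this
      refine ⟨nsel y0, Set.mem_image_of_mem _ hy0t, ?_⟩
      have hperp : (inner ℝ y0 (nsel y0) : ℝ) = 0 := (hnselspec y0).2
      have hnorm1 : ‖nsel y0‖ = 1 := (hnselspec y0).1
      have key : |(inner ℝ (‖x‖⁻¹ • x) (nsel y0) : ℝ)| ≤ δ := by
        have : (inner ℝ (‖x‖⁻¹ • x) (nsel y0) : ℝ)
            = inner ℝ (‖x‖⁻¹ • x - y0) (nsel y0) := by
          rw [inner_sub_left, hperp]; ring
        rw [this]
        calc |(inner ℝ (‖x‖⁻¹ • x - y0) (nsel y0) : ℝ)|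
            ≤ ‖‖x‖⁻¹ • x - y0‖ * ‖nsel y0‖ := abs_real_inner_le_norm _ _
          _ ≤ δ := by
              rw [hnorm1, mul_one]
              exact le_of_lt (by simpa [Metric.mem_ball, dist_eq_norm] using hy0b)
      have hx' : (inner ℝ x (nsel y0) : ℝ) = ‖x‖ * inner ℝ (‖x‖⁻¹ • x) (nsel y0) := by
        rw [real_inner_smul_left]
        field_simp
      rw [hx', abs_mul, abs_of_nonneg (norm_nonneg x)]
      calc ‖x‖ * |(inner ℝ (‖x‖⁻¹ • x) (nsel y0) : ℝ)| ≤ ‖x‖ * δ :=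
            mul_le_mul_of_nonneg_left key (norm_nonneg x)
        _ = δ * ‖x‖ := by ring

lemma smallF_line (n : Pl) (hn : ‖n‖ = 1) (q : ℝ) {X : Set Memb}
    (h : ∀ m ∈ X, |(inner ℝ m.1 n : ℝ) - q| ≤ m.2) : SmallF X :=
  ⟨{lineNQ n q}, finite_singleton _, by simpa using isLine_lineNQ n hn q,
    fun b hb => ⟨_, rfl, pierces_lineNQ n hn q b (h b hb)⟩⟩

lemma smallF_fat (p : Pl) {δ : ℝ} (hδ : 0 < δ) :
    SmallF {m : Memb | δ * ‖m.1 - p‖ ≤ m.2} := by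
  obtain ⟨N, hNf, _, hNu, hN⟩ := exists_net δ hδ
  refine ⟨(fun n => lineNQ n (inner ℝ p n)) '' N, hNf.image _, ?_, ?_⟩
  · rintro L ⟨n, hn, rfl⟩; exact isLine_lineNQ _ (hNu n hn) _
  · intro b hb
    obtain ⟨n, hnN, hle⟩ := hN (b.1 - p)
    refine ⟨_, Set.mem_image_of_mem _ hnN, pierces_lineNQ _ (hNu n hnN) _ _ ?_⟩
    rw [show (inner ℝ b.1 n : ℝ) - inner ℝ p n = inner ℝ (b.1 - p) n by rw [inner_sub_left]]
    exact hle.trans hb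

def BigF (X : Set Memb) : Prop := ¬ SmallF X

lemma bigF_mono {X Y : Set Memb} (h : BigF X) (hXY : X ⊆ Y) : BigF Y :=
  fun hY => h (smallF_mono hY hXY)

lemma bigF_diff {X Y : Set Memb} (h : BigF X) (hY : SmallF Y) : BigF (X \ Y) := by
  intro hS
  exact h (smallF_mono (smallF_union hS hY) (fun m hm => by
    by_cases hmY : m ∈ Y
    · exact Or.inr hmY
    · exact Or.inl ⟨hm, hmY⟩))

lemma bigF_nonempty {X : Set Memb} (h : BigF X) : X.Nonempty := by
  rcases Set.eq_empty_or_nonempty X with rfl | hne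
  · exact absurd smallF_empty h
  · exact hne

lemma bigF_subset_union {X Y Z : Set Memb} (h : BigF X) (hsub : X ⊆ Y ∪ Z)
    (hY : SmallF Y) : BigF Z :=
  bigF_mono (bigF_diff h hY) (fun m hm => (hsub hm.1).resolve_left hm.2)

-- finite bounds helpers
lemma finite_bound_above {α : Type*} {t : Set α} (ht : t.Finite) (f : α → ℝ) :
    ∃ M, ∀ x ∈ t, f x ≤ M := by
  classical
  refine Set.Finite.induction_on _ ht ⟨0, by simp⟩ ?_
  rintro a s _ _ ⟨M, hM⟩
  exact ⟨max M (f a), by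
    rintro x (rfl | hx)
    · exact le_max_right _ _
    · exact (hM x hx).trans (le_max_left _ _)⟩

lemma finite_bound_pos {α : Type*} {t : Set α} (ht : t.Finite) (f : α → ℝ)
    (hf : ∀ x ∈ t, 0 < f x) : ∃ e, 0 < e ∧ ∀ x ∈ t, e ≤ f x := by
  classical
  revert hf
  refine Set.Finite.induction_on _ ht (fun _ => ⟨1, one_pos, by simp⟩) ?_
  rintro a s _ _ ih hf
  obtain ⟨e, he, hes⟩ := ih fun x hx => hf x (Set.mem_insert_of_mem _ hx)
  refine ⟨min e (f a), lt_min he (hf a (Set.mem_insert _ _)), ?_⟩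
  rintro x (rfl | hx)
  · exact min_le_right _ _
  · exact (min_le_left _ _).trans (hes x hx)

def Tset (X : Set Memb) (p : Pl) (δ : ℝ) : Set Memb :=
  {m ∈ X | ‖m.1 - p‖ ≤ δ ∧ m.2 ≤ δ * ‖m.1 - p‖}

lemma cond_point {X : Set Memb} {R : ℝ} (hX : BigF X)
    (hbd : ∀ m ∈ X, ‖m.1‖ ≤ R) :
    ∃ p : Pl, ∀ δ, 0 < δ → BigF (Tset X p δ) := by
  by_contra hcon
  push_neg at hcon
  -- for each p, a positive δ with SmallF (Tset X p δ)
  have hcon' : ∀ p : Pl, ∃ δ, 0 < δ ∧ SmallF (Tset X p δ) := by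
    intro p
    obtain ⟨δ, hδ, hb⟩ := hcon p
    exact ⟨δ, hδ, not_not.1 hb⟩
  choose d hd hsmall using hcon'
  have hK : IsCompact (Metric.closedBall (0 : Pl) R) := isCompact_closedBall _ _
  have hcover : Metric.closedBall (0 : Pl) R ⊆
      ⋃ p ∈ Metric.closedBall (0 : Pl) R, Metric.ball p (d p) := by
    intro p hp; exact Set.mem_biUnion hp (Metric.mem_ball_self (hd p))
  obtain ⟨t, hts, htf, htc⟩ := hK.elim_finite_subcover_image
    (fun p _ => Metric.isOpen_ball) hcover
  apply hX
  have hsub : X ⊆ ⋃ p ∈ t, (Tset X p (d p) ∪ {m : Memb | d p * ‖m.1 - p‖ ≤ m.2}) := by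
    intro m hm
    have hc : m.1 ∈ Metric.closedBall (0 : Pl) R := by
      rw [Metric.mem_closedBall, dist_eq_norm, sub_zero]; exact hbd m hm
    have := htc hc
    simp only [Set.mem_iUnion] at this
    obtain ⟨p, hpt, hpb⟩ := this
    refine Set.mem_biUnion hpt ?_
    rcases le_total (d p * ‖m.1 - p‖) m.2 with h | h
    · exact Or.inr h
    · refine Or.inl ⟨hm, ?_, h⟩
      have : ‖m.1 - p‖ < d p := by
        rw [← dist_eq_norm]; exact Metric.mem_ball.1 hpb
      exact this.le
  refine smallF_mono (smallF_biUnion htf ?_) hsub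
  intro p hpt
  exact smallF_union (hsmall p) (smallF_fat p (hd p))

def Cset (X : Set Memb) (p u : Pl) (ε δ : ℝ) : Set Memb :=
  {m ∈ X | 0 < ‖m.1 - p‖ ∧ ‖m.1 - p‖ ≤ δ ∧ m.2 ≤ ε * ‖m.1 - p‖ ∧
    ‖(m.1 - p) - ‖m.1 - p‖ • u‖ ≤ ε * ‖m.1 - p‖}

lemma cond_dir_bounded {X : Set Memb} {p : Pl}
    (hT : ∀ δ, 0 < δ → BigF (Tset X p δ)) (hXr : ∀ m ∈ X, 0 < m.2) :
    ∃ u : Pl, ‖u‖ = 1 ∧ ∀ ε δ, 0 < ε → 0 < δ → BigF (Cset X p u ε δ) := by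
  by_contra hcon
  push_neg at hcon
  have hcon' : ∀ u : Pl, ‖u‖ = 1 → ∃ ε δ, 0 < ε ∧ 0 < δ ∧ SmallF (Cset X p u ε δ) := by
    intro u hu
    obtain ⟨ε, δ, hε, hδ, hb⟩ := hcon u hu
    exact ⟨ε, δ, hε, hδ, not_not.1 hb⟩
  classical
  -- choice on sphere
  set eps : Pl → ℝ := fun u => if h : ‖u‖ = 1 then (hcon' u h).choose else 1 with heps
  have hspec : ∀ u : Pl, ‖u‖ = 1 → ∃ δ, 0 < eps u ∧ 0 < δ ∧
      SmallF (Cset X p u (eps u) δ) := by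
    intro u hu
    obtain ⟨δ, h1, h2, h3⟩ := (hcon' u hu).choose_spec
    refine ⟨δ, ?_, h2, ?_⟩ <;> simp only [heps, dif_pos hu] <;> assumption
  set del : Pl → ℝ := fun u => if h : ‖u‖ = 1 then (hspec u h).choose else 1 with hdel
  have hspec2 : ∀ u : Pl, ‖u‖ = 1 → 0 < eps u ∧ 0 < del u ∧
      SmallF (Cset X p u (eps u) (del u)) := by
    intro u hu
    obtain ⟨h1, h2, h3⟩ := (hspec u hu).choose_spec
    refine ⟨h1, ?_, ?_⟩ <;> simp only [hdel, dif_pos hu] <;> assumption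
  have hsph : IsCompact (Metric.sphere (0 : Pl) 1) := isCompact_sphere _ _
  have hcover : Metric.sphere (0 : Pl) 1 ⊆
      ⋃ u ∈ Metric.sphere (0 : Pl) 1, Metric.ball u (eps u) := by
    intro u hu
    have hu1 : ‖u‖ = 1 := by simpa using hu
    exact Set.mem_biUnion hu ((Metric.mem_ball_self (hspec2 u hu1).1))
  obtain ⟨t, hts, htf, htc⟩ := hsph.elim_finite_subcover_image
    (fun u _ => Metric.isOpen_ball) hcover
  -- uniform lower bound on eps, del over t
  have hunit : ∀ u ∈ t, ‖u‖ = 1 := fun u hu => by simpa using hts hu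
  obtain ⟨e, he, hes⟩ := finite_bound_pos htf eps (fun u hu => (hspec2 u (hunit u hu)).1)
  obtain ⟨e', he', hes'⟩ := finite_bound_pos htf del (fun u hu => (hspec2 u (hunit u hu)).2.1)
  set δ' := min e e' with hδ'
  have hδ'pos : 0 < δ' := lt_min he he'
  apply hT δ' hδ'pos
  have hsub : Tset X p δ' ⊆ ⋃ u ∈ t, Cset X p u (eps u) (del u) := by
    rintro m ⟨hmX, hm1, hm2⟩
    have hr := hXr m hmX
    have hpos : 0 < ‖m.1 - p‖ := by
      by_contra h
      push_neg at h
      have : ‖m.1 - p‖ = 0 := le_antisymm h (norm_nonneg _)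
      rw [this, mul_zero] at hm2
      linarith
    have hdir : ‖m.1 - p‖⁻¹ • (m.1 - p) ∈ Metric.sphere (0 : Pl) 1 := by
      simp [norm_smul, abs_of_nonneg (inv_nonneg.2 (norm_nonneg _)),
        inv_mul_cancel₀ (ne_of_gt hpos)]
    have := htc hdir
    simp only [Set.mem_iUnion] at this
    obtain ⟨u, hut, hub⟩ := this
    refine Set.mem_biUnion hut ⟨hmX, hpos, ?_, ?_, ?_⟩
    · exact hm1.trans ((min_le_right e e').trans (hes' u hut))
    · calc m.2 ≤ δ' * ‖m.1 - p‖ := hm2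
        _ ≤ eps u * ‖m.1 - p‖ :=
          mul_le_mul_of_nonneg_right ((min_le_left e e').trans (hes u hut)) (norm_nonneg _)
    · have hlt : ‖‖m.1 - p‖⁻¹ • (m.1 - p) - u‖ < eps u := by
        rw [← dist_eq_norm]; exact Metric.mem_ball.1 hub
      have : (m.1 - p) - ‖m.1 - p‖ • u = ‖m.1 - p‖ • (‖m.1 - p‖⁻¹ • (m.1 - p) - u) := by
        rw [smul_sub, smul_inv_smul₀ (ne_of_gt hpos)]
      rw [this, norm_smul, Real.norm_eq_abs, abs_of_nonneg (norm_nonneg _)]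
      rw [mul_comm (eps u)]
      exact mul_le_mul_of_nonneg_left hlt.le (norm_nonneg _)
  refine smallF_mono (smallF_biUnion htf ?_) hsub
  intro u hut
  exact (hspec2 u (hunit u hut)).2.2

def WinB (F : Set Memb) (p u v : Pl) (ε δ : ℝ) : Set Memb :=
  {m ∈ F | m.2 < inner ℝ (m.1 - p) v ∧ (inner ℝ (m.1 - p) v : ℝ) ≤ ε * inner ℝ (m.1 - p) u ∧
    m.2 ≤ ε * inner ℝ (m.1 - p) u ∧ 0 < (inner ℝ (m.1 - p) u : ℝ) ∧
    (inner ℝ (m.1 - p) u : ℝ) ≤ δ}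

lemma Cset_mono {X : Set Memb} {p u : Pl} {ε δ ε' δ' : ℝ} (hε : ε ≤ ε') (hδ : δ ≤ δ') :
    Cset X p u ε δ ⊆ Cset X p u ε' δ' := by
  rintro m ⟨h0, h1, h2, h3, h4⟩
  exact ⟨h0, h1, h2.trans hδ, h3.trans (mul_le_mul_of_nonneg_right hε (norm_nonneg _)),
    h4.trans (mul_le_mul_of_nonneg_right hε (norm_nonneg _))⟩


lemma inner_decomp (c u x : Pl) :
    (inner ℝ (c - ‖c‖ • u) x : ℝ) = inner ℝ c x - ‖c‖ * inner ℝ u x := by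
  rw [inner_sub_left, real_inner_smul_left]

lemma outB_of_cond {X : Set Memb} {p u : Pl} (hu : ‖u‖ = 1)
    (hC : ∀ ε δ, 0 < ε → 0 < δ → BigF (Cset X p u ε δ)) :
    ∃ v : Pl, ‖v‖ = 1 ∧ ∀ ε δ, 0 < ε → 0 < δ → BigF (WinB X p u v ε δ) := by
  classical
  obtain ⟨v₀, hv₀, hov₀⟩ := exists_unit_orthogonal u
  have hLset : SmallF {m : Memb | |(inner ℝ (m.1 - p) v₀ : ℝ)| ≤ m.2} := by
    apply smallF_line v₀ hv₀ (inner ℝ p v₀)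
    intro m hm
    rwa [show (inner ℝ m.1 v₀ : ℝ) - inner ℝ p v₀ = inner ℝ (m.1 - p) v₀ by rw [inner_sub_left]]
  -- side selection
  have hside : ∃ v : Pl, ‖v‖ = 1 ∧ (inner ℝ u v : ℝ) = 0 ∧
      ∀ ε δ, 0 < ε → 0 < δ →
        BigF (Cset X p u ε δ ∩ {m : Memb | m.2 < inner ℝ (m.1 - p) v}) := by
    by_cases hplus : ∀ ε δ, 0 < ε → 0 < δ →
        BigF (Cset X p u ε δ ∩ {m : Memb | m.2 < inner ℝ (m.1 - p) v₀})
    · exact ⟨v₀, hv₀, hov₀, hplus⟩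
    · push_neg at hplus
      obtain ⟨ε₁, δ₁, hε₁, hδ₁, hsm⟩ := hplus
      rw [BigF, not_not] at hsm
      refine ⟨-v₀, by rw [norm_neg]; exact hv₀, by rw [inner_neg_right, hov₀, neg_zero], ?_⟩
      intro ε δ hε hδ
      have hbig := hC (min ε ε₁) (min δ δ₁) (lt_min hε hε₁) (lt_min hδ hδ₁)
      refine bigF_subset_union hbig ?_
        (smallF_union hLset hsm)
      rintro m hm
      rcases le_or_gt (|(inner ℝ (m.1 - p) v₀ : ℝ)|) m.2 with habs | habs
      · exact Or.inl (Or.inl habs)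
      · rcases lt_abs.1 habs with h | h
        · exact Or.inl (Or.inr ⟨Cset_mono (min_le_right _ _) (min_le_right _ _) hm, h⟩)
        · refine Or.inr ⟨Cset_mono (min_le_left _ _) (min_le_left _ _) hm, ?_⟩
          simp only [Set.mem_setOf_eq, inner_neg_right]
          linarith
  obtain ⟨v, hv, hov, hbig⟩ := hside
  refine ⟨v, hv, ?_⟩
  intro ε δ hε hδ
  set ε' := min (ε / 4) (1 / 2) with hε'
  have hε'pos : 0 < ε' := lt_min (by linarith) (by norm_num)
  refine bigF_mono (bigF_mono (hbig ε' δ hε'pos hδ) ?_) (fun m hm => hm)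
  rintro m ⟨⟨hmX, hpos, hle, hrle, hwle⟩, hside'⟩
  set c := m.1 - p with hc
  set w := c - ‖c‖ • u with hw
  have hwu : |(inner ℝ w u : ℝ)| ≤ ε' * ‖c‖ := by
    calc |(inner ℝ w u : ℝ)| ≤ ‖w‖ * ‖u‖ := abs_real_inner_le_norm _ _
      _ ≤ ε' * ‖c‖ := by rw [hu, mul_one]; exact hwle
  have hsu : (inner ℝ c u : ℝ) = inner ℝ w u + ‖c‖ := by
    rw [hw, inner_decomp, real_inner_self_eq_norm_sq, hu]
    ring
  have hε'le : ε' ≤ 1 / 2 := min_le_right _ _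
  have hs_lb : ‖c‖ / 2 ≤ (inner ℝ c u : ℝ) := by
    have := abs_le.1 hwu
    nlinarith [norm_nonneg c]
  have hs_ub : (inner ℝ c u : ℝ) ≤ ‖c‖ := by
    calc (inner ℝ c u : ℝ) ≤ |(inner ℝ c u : ℝ)| := le_abs_self _
      _ ≤ ‖c‖ * ‖u‖ := abs_real_inner_le_norm _ _
      _ = ‖c‖ := by rw [hu, mul_one]
  have hsv : (inner ℝ c v : ℝ) = inner ℝ w v := by
    rw [hw, inner_decomp, hov]
    ring
  have hwv : |(inner ℝ w v : ℝ)| ≤ ε' * ‖c‖ := by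
    calc |(inner ℝ w v : ℝ)| ≤ ‖w‖ * ‖v‖ := abs_real_inner_le_norm _ _
      _ ≤ ε' * ‖c‖ := by rw [hv, mul_one]; exact hwle
  have hspos : 0 < (inner ℝ c u : ℝ) := lt_of_lt_of_le (by linarith) hs_lb
  have hε'4 : ε' ≤ ε / 4 := min_le_left _ _
  refine ⟨hmX, hside', ?_, ?_, hspos, hs_ub.trans hle⟩
  · have h1 : (inner ℝ c v : ℝ) ≤ ε' * ‖c‖ := by
      rw [hsv]; exact (le_abs_self _).trans hwv
    nlinarith
  · nlinarith

def Dset (X : Set Memb) (u : Pl) (ε S : ℝ) : Set Memb :=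
  {m ∈ X | S ≤ ‖m.1‖ ∧ m.2 ≤ ε * ‖m.1‖ ∧ ‖m.1 - ‖m.1‖ • u‖ ≤ ε * ‖m.1‖}

lemma Dset_mono {X : Set Memb} {u : Pl} {ε S ε' S' : ℝ} (hε : ε ≤ ε') (hS : S' ≤ S) :
    Dset X u ε S ⊆ Dset X u ε' S' := by
  rintro m ⟨h0, h1, h2, h3⟩
  exact ⟨h0, hS.trans h1, h2.trans (mul_le_mul_of_nonneg_right hε (norm_nonneg _)),
    h3.trans (mul_le_mul_of_nonneg_right hε (norm_nonneg _))⟩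

lemma cond_dir_far {X : Set Memb} (hXr : ∀ m ∈ X, 0 < m.2)
    (hfar : ∀ R : ℝ, BigF {m ∈ X | R < ‖m.1‖}) :
    ∃ u : Pl, ‖u‖ = 1 ∧ ∀ ε S, 0 < ε → BigF (Dset X u ε S) := by
  classical
  by_contra hcon
  push_neg at hcon
  have hcon' : ∀ u : Pl, ‖u‖ = 1 → ∃ ε S, 0 < ε ∧ SmallF (Dset X u ε S) := by
    intro u hu
    obtain ⟨ε, S, hε, hb⟩ := hcon u hu
    exact ⟨ε, S, hε, not_not.1 hb⟩
  set eps : Pl → ℝ := fun u => if h : ‖u‖ = 1 then (hcon' u h).choose else 1 with heps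
  have hspec : ∀ u : Pl, ‖u‖ = 1 → ∃ S, 0 < eps u ∧ SmallF (Dset X u (eps u) S) := by
    intro u hu
    obtain ⟨S, h1, h2⟩ := (hcon' u hu).choose_spec
    refine ⟨S, ?_, ?_⟩ <;> simp only [heps, dif_pos hu] <;> assumption
  set Sb : Pl → ℝ := fun u => if h : ‖u‖ = 1 then (hspec u h).choose else 1 with hSb
  have hspec2 : ∀ u : Pl, ‖u‖ = 1 → 0 < eps u ∧ SmallF (Dset X u (eps u) (Sb u)) := by
    intro u hu
    obtain ⟨h1, h2⟩ := (hspec u hu).choose_spec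
    refine ⟨h1, ?_⟩ <;> simp only [hSb, dif_pos hu] <;> assumption
  have hsph : IsCompact (Metric.sphere (0 : Pl) 1) := isCompact_sphere _ _
  have hcover : Metric.sphere (0 : Pl) 1 ⊆
      ⋃ u ∈ Metric.sphere (0 : Pl) 1, Metric.ball u (eps u) := by
    intro u hu
    have hu1 : ‖u‖ = 1 := by simpa using hu
    exact Set.mem_biUnion hu ((Metric.mem_ball_self (hspec2 u hu1).1))
  obtain ⟨t, hts, htf, htc⟩ := hsph.elim_finite_subcover_image
    (fun u _ => Metric.isOpen_ball) hcover
  have hunit : ∀ u ∈ t, ‖u‖ = 1 := fun u hu => by simpa using hts hu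
  obtain ⟨e, he, hes⟩ := finite_bound_pos htf eps (fun u hu => (hspec2 u (hunit u hu)).1)
  obtain ⟨M, hM⟩ := finite_bound_above htf Sb
  apply hfar (max M 1)
  have hsub : {m ∈ X | max M 1 < ‖m.1‖} ⊆
      (⋃ u ∈ t, Dset X u (eps u) (Sb u)) ∪ {m : Memb | e * ‖m.1 - 0‖ ≤ m.2} := by
    rintro m ⟨hmX, hm⟩
    have hpos : 0 < ‖m.1‖ := lt_of_le_of_lt (le_trans (by norm_num) (le_max_right M 1)) hm
    rcases le_or_gt (e * ‖m.1‖) m.2 with hfat | hthin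
    · right; simpa [sub_zero] using hfat
    · left
      have hdir : ‖m.1‖⁻¹ • m.1 ∈ Metric.sphere (0 : Pl) 1 := by
        simp [norm_smul, abs_of_nonneg (inv_nonneg.2 (norm_nonneg _)),
          inv_mul_cancel₀ (ne_of_gt hpos)]
      have := htc hdir
      simp only [Set.mem_iUnion] at this
      obtain ⟨u, hut, hub⟩ := this
      refine Set.mem_biUnion hut ⟨hmX, ?_, ?_, ?_⟩
      · exact le_trans (le_trans (hM u hut) (le_max_left M 1)) hm.le
      · exact hthin.le.trans (mul_le_mul_of_nonneg_right (hes u hut) (norm_nonneg _))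
      · have hlt : ‖‖m.1‖⁻¹ • m.1 - u‖ < eps u := by
          rw [← dist_eq_norm]; exact Metric.mem_ball.1 hub
        have heq : m.1 - ‖m.1‖ • u = ‖m.1‖ • (‖m.1‖⁻¹ • m.1 - u) := by
          rw [smul_sub, smul_inv_smul₀ (ne_of_gt hpos)]
        rw [heq, norm_smul, Real.norm_eq_abs, abs_of_nonneg (norm_nonneg _), mul_comm (eps u)]
        exact mul_le_mul_of_nonneg_left hlt.le (norm_nonneg _)
  refine smallF_mono (smallF_union (smallF_biUnion htf ?_) ?_) hsub
  · intro u hut; exact (hspec2 u (hunit u hut)).2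
  · exact smallF_fat 0 he

lemma cond_offset {X : Set Memb} {u : Pl} (v₀ : Pl)
    (hD : ∀ ε S, 0 < ε → BigF (Dset X u ε S)) :
    (∃ h : ℝ, ∀ γ ε S, 0 < γ → 0 < ε →
        BigF (Dset X u ε S ∩ {m : Memb | |(inner ℝ m.1 v₀ : ℝ) - h| ≤ γ})) ∨
    (∃ σ : ℝ, (σ = 1 ∨ σ = -1) ∧ ∀ G ε S, 0 < ε →
        BigF (Dset X u ε S ∩ {m : Memb | G ≤ σ * (inner ℝ m.1 v₀ : ℝ)})) := by
  classical
  by_cases hinf1 : ∀ G ε S, 0 < ε →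
      BigF (Dset X u ε S ∩ {m : Memb | G ≤ (1:ℝ) * (inner ℝ m.1 v₀ : ℝ)})
  · exact Or.inr ⟨1, Or.inl rfl, hinf1⟩
  by_cases hinf2 : ∀ G ε S, 0 < ε →
      BigF (Dset X u ε S ∩ {m : Memb | G ≤ (-1:ℝ) * (inner ℝ m.1 v₀ : ℝ)})
  · exact Or.inr ⟨-1, Or.inr rfl, hinf2⟩
  push_neg at hinf1 hinf2
  obtain ⟨G₁, ε₁, S₁, hε₁, hsm₁⟩ := hinf1
  obtain ⟨G₂, ε₂, S₂, hε₂, hsm₂⟩ := hinf2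
  rw [BigF, not_not] at hsm₁ hsm₂
  left
  by_contra hno
  push_neg at hno
  have hno' : ∀ h : ℝ, ∃ γ ε S, 0 < γ ∧ 0 < ε ∧
      SmallF (Dset X u ε S ∩ {m : Memb | |(inner ℝ m.1 v₀ : ℝ) - h| ≤ γ}) := by
    intro h
    obtain ⟨γ, ε, S, hγ, hε, hb⟩ := hno h
    exact ⟨γ, ε, S, hγ, hε, not_not.1 hb⟩
  choose γf εf Sf hγf hεf hsmf using hno'
  set G₀ := max G₁ G₂ with hG₀
  have hKc : IsCompact (Set.Icc (-G₀) G₀) := isCompact_Icc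
  have hcover : Set.Icc (-G₀) G₀ ⊆ ⋃ h ∈ Set.Icc (-G₀) G₀, Metric.ball h (γf h) := by
    intro h hh; exact Set.mem_biUnion hh (Metric.mem_ball_self (hγf h))
  obtain ⟨t, hts, htf, htc⟩ := hKc.elim_finite_subcover_image
    (fun h _ => Metric.isOpen_ball) hcover
  obtain ⟨e, he, hes⟩ := finite_bound_pos htf εf (fun h _ => hεf h)
  obtain ⟨M, hM⟩ := finite_bound_above htf Sf
  set e' := min e (min ε₁ ε₂) with he'
  have he'pos : 0 < e' := lt_min he (lt_min hε₁ hε₂)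
  set M' := max M (max S₁ S₂) with hM'
  apply hD e' M' he'pos
  have hsub : Dset X u e' M' ⊆
      (⋃ h ∈ t, Dset X u (εf h) (Sf h) ∩ {m : Memb | |(inner ℝ m.1 v₀ : ℝ) - h| ≤ γf h}) ∪
      ((Dset X u ε₁ S₁ ∩ {m : Memb | G₁ ≤ (1:ℝ) * (inner ℝ m.1 v₀ : ℝ)}) ∪
       (Dset X u ε₂ S₂ ∩ {m : Memb | G₂ ≤ (-1:ℝ) * (inner ℝ m.1 v₀ : ℝ)})) := by
    intro m hm
    set y := (inner ℝ m.1 v₀ : ℝ) with hy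
    rcases lt_or_ge y (-G₀) with hcase | hcase
    · refine Or.inr (Or.inr ⟨Dset_mono (le_trans (min_le_right _ _) (min_le_right _ _))
          (le_max_of_le_right (le_max_right _ _)) hm, ?_⟩)
      simp only [Set.mem_setOf_eq, neg_one_mul]
      have : G₂ ≤ G₀ := le_max_right _ _
      linarith
    · rcases le_or_gt y G₀ with hcase2 | hcase2
      · -- in the compact interval
        have hyI : y ∈ Set.Icc (-G₀) G₀ := ⟨hcase, hcase2⟩
        have := htc hyI
        simp only [Set.mem_iUnion] at this
        obtain ⟨h, hht, hhb⟩ := this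
        refine Or.inl (Set.mem_biUnion hht ⟨Dset_mono (le_trans (min_le_left _ _) (hes h hht))
          (le_trans (hM h hht) (le_max_left _ _)) hm, ?_⟩)
        simp only [Set.mem_setOf_eq]
        have : |y - h| < γf h := by rw [← Real.dist_eq]; exact Metric.mem_ball.1 hhb
        exact this.le
      · refine Or.inr (Or.inl ⟨Dset_mono (le_trans (min_le_right _ _) (min_le_left _ _))
          (le_max_of_le_right (le_max_left _ _)) hm, ?_⟩)
        simp only [Set.mem_setOf_eq, one_mul]
        have : G₁ ≤ G₀ := le_max_left _ _
        linarith
  refine smallF_mono (smallF_union (smallF_biUnion htf ?_) (smallF_union hsm₁ hsm₂)) hsub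
  intro h _
  exact hsmf h

lemma s_lb {u : Pl} (hu : ‖u‖ = 1) {c : Pl} {ε : ℝ} (hε : ε ≤ 1/2)
    (hw : ‖c - ‖c‖ • u‖ ≤ ε * ‖c‖) : ‖c‖/2 ≤ (inner ℝ c u : ℝ) ∧ (inner ℝ c u : ℝ) ≤ ‖c‖ := by
  have hwu : |(inner ℝ (c - ‖c‖ • u) u : ℝ)| ≤ ε * ‖c‖ := by
    calc |(inner ℝ (c - ‖c‖ • u) u : ℝ)| ≤ ‖c - ‖c‖ • u‖ * ‖u‖ := abs_real_inner_le_norm _ _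
      _ ≤ ε * ‖c‖ := by rw [hu, mul_one]; exact hw
  rw [inner_decomp, real_inner_self_eq_norm_sq, hu] at hwu
  have h2 := abs_le.1 hwu
  constructor
  · nlinarith [norm_nonneg c]
  · calc (inner ℝ c u : ℝ) ≤ |(inner ℝ c u : ℝ)| := le_abs_self _
      _ ≤ ‖c‖ * ‖u‖ := abs_real_inner_le_norm _ _
      _ = ‖c‖ := by rw [hu, mul_one]

def WinH (X : Set Memb) (p u v : Pl) (γ S : ℝ) : Set Memb :=
  {m ∈ X | m.2 < inner ℝ (m.1 - p) v ∧ (inner ℝ (m.1 - p) v : ℝ) ≤ γ ∧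
    S ≤ (inner ℝ (m.1 - p) u : ℝ)}

lemma outH_of {X : Set Memb} {u : Pl} (hu : ‖u‖ = 1) (v₀ : Pl) (hv₀ : ‖v₀‖ = 1)
    (hov : (inner ℝ u v₀ : ℝ) = 0) (h : ℝ)
    (hDh : ∀ γ ε S, 0 < γ → 0 < ε →
      BigF (Dset X u ε S ∩ {m : Memb | |(inner ℝ m.1 v₀ : ℝ) - h| ≤ γ})) :
    ∃ p v : Pl, ‖v‖ = 1 ∧ ∀ γ S, 0 < γ → BigF (WinH X p u v γ S) := by
  classical
  set p := h • v₀ with hp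
  have hcoordv₀ : ∀ x : Pl, (inner ℝ (x - p) v₀ : ℝ) = inner ℝ x v₀ - h := by
    intro x
    rw [hp, inner_sub_left, real_inner_smul_left, real_inner_self_eq_norm_sq, hv₀]
    ring
  have hov' : (inner ℝ v₀ u : ℝ) = 0 := by rw [real_inner_comm]; exact hov
  have hcoordu : ∀ x : Pl, (inner ℝ (x - p) u : ℝ) = inner ℝ x u := by
    intro x
    rw [hp, inner_sub_left, real_inner_smul_left, hov']
    ring
  have hLset : SmallF {m : Memb | |(inner ℝ m.1 v₀ : ℝ) - h| ≤ m.2} :=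
    smallF_line v₀ hv₀ h (fun m hm => hm)
  have hside : ∃ v : Pl, ‖v‖ = 1 ∧ (inner ℝ u v : ℝ) = 0 ∧
      (∀ x : Pl, |(inner ℝ x v : ℝ)| = |(inner ℝ x v₀ : ℝ)|) ∧
      ∀ γ ε S, 0 < γ → 0 < ε →
        BigF ((Dset X u ε S ∩ {m : Memb | |(inner ℝ m.1 v₀ : ℝ) - h| ≤ γ}) ∩
          {m : Memb | m.2 < inner ℝ (m.1 - p) v}) := by
    by_cases hplus : ∀ γ ε S, 0 < γ → 0 < ε →
        BigF ((Dset X u ε S ∩ {m : Memb | |(inner ℝ m.1 v₀ : ℝ) - h| ≤ γ}) ∩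
          {m : Memb | m.2 < inner ℝ (m.1 - p) v₀})
    · exact ⟨v₀, hv₀, hov, fun x => rfl, hplus⟩
    · push_neg at hplus
      obtain ⟨γ₁, ε₁, S₁, hγ₁, hε₁, hsm⟩ := hplus
      rw [BigF, not_not] at hsm
      refine ⟨-v₀, by rw [norm_neg]; exact hv₀, by rw [inner_neg_right, hov, neg_zero],
        fun x => by rw [inner_neg_right, abs_neg], ?_⟩
      intro γ ε S hγ hε
      have hbig := hDh (min γ γ₁) (min ε ε₁) (max S S₁) (lt_min hγ hγ₁) (lt_min hε hε₁)
      refine bigF_subset_union hbig ?_ (smallF_union hLset hsm)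
      rintro m ⟨hmD, hmI⟩
      simp only [Set.mem_setOf_eq] at hmI
      rcases le_or_gt (|(inner ℝ m.1 v₀ : ℝ) - h|) m.2 with habs | habs
      · exact Or.inl (Or.inl habs)
      · rcases lt_abs.1 habs with hcase | hcase
        · refine Or.inl (Or.inr ⟨⟨Dset_mono (min_le_right _ _) (le_max_right _ _) hmD, ?_⟩, ?_⟩)
          · exact le_trans hmI (min_le_right _ _)
          · simp only [Set.mem_setOf_eq, hcoordv₀]; exact hcase
        · refine Or.inr ⟨⟨Dset_mono (min_le_left _ _) (le_max_left _ _) hmD, ?_⟩, ?_⟩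
          · exact le_trans hmI (min_le_left _ _)
          · simp only [Set.mem_setOf_eq, hcoordv₀, inner_neg_right]
            linarith
  obtain ⟨v, hv, hovv, habs, hbig⟩ := hside
  refine ⟨p, v, hv, ?_⟩
  intro γ S hγ
  refine bigF_mono (hbig γ (1/2) (2 * |S| + 2) hγ (by norm_num)) ?_
  rintro m ⟨⟨hmD, hmI⟩, hmside⟩
  simp only [Set.mem_setOf_eq] at hmI hmside
  obtain ⟨hmX, hS, hr, hdir⟩ := hmD
  refine ⟨hmX, hmside, ?_, ?_⟩
  · have h1 : (inner ℝ (m.1 - p) v : ℝ) ≤ |(inner ℝ (m.1 - p) v : ℝ)| := le_abs_self _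
    rw [habs] at h1
    refine h1.trans ?_
    rw [hcoordv₀]
    exact hmI
  · rw [hcoordu]
    have := (s_lb hu (le_refl (1/2:ℝ)) hdir).1
    have habs' : |S| + 1 ≤ ‖m.1‖ / 2 := by linarith
    calc S ≤ |S| := le_abs_self _
      _ ≤ ‖m.1‖ / 2 := by linarith
      _ ≤ _ := this

def WinP (X : Set Memb) (u v : Pl) (G ε S : ℝ) : Set Memb :=
  {m ∈ X | m.2 < inner ℝ m.1 v ∧ G ≤ (inner ℝ m.1 v : ℝ) - m.2 ∧
    (inner ℝ m.1 v : ℝ) ≤ ε * (inner ℝ m.1 u : ℝ) ∧ S ≤ (inner ℝ m.1 u : ℝ)}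

lemma outP_of {X : Set Memb} {u : Pl} (hu : ‖u‖ = 1) (v₀ : Pl) (hv₀ : ‖v₀‖ = 1)
    (hov : (inner ℝ u v₀ : ℝ) = 0) (σ : ℝ) (hσ : σ = 1 ∨ σ = -1)
    (htail : ∀ G ε S, 0 < ε →
      BigF (Dset X u ε S ∩ {m : Memb | G ≤ σ * (inner ℝ m.1 v₀ : ℝ)})) :
    ∃ v : Pl, ‖v‖ = 1 ∧ ∀ G ε S, 0 < ε → BigF (WinP X u v G ε S) := by
  set v := σ • v₀ with hvdef
  have hσ1 : |σ| = 1 := by rcases hσ with rfl | rfl <;> norm_num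
  have hv : ‖v‖ = 1 := by rw [hvdef, norm_smul, Real.norm_eq_abs, hσ1, hv₀, mul_one]
  have hovv : (inner ℝ u v : ℝ) = 0 := by rw [hvdef, real_inner_smul_right, hov, mul_zero]
  have hcoord : ∀ x : Pl, (inner ℝ x v : ℝ) = σ * inner ℝ x v₀ := by
    intro x; rw [hvdef, real_inner_smul_right]
  refine ⟨v, hv, ?_⟩
  intro G ε S hε
  set ε' := min (ε/4) (1/2) with hε'
  have hε'pos : 0 < ε' := lt_min (by linarith) (by norm_num)
  set G'' := max G 0 with hG''
  have hLset : SmallF {m : Memb | |(inner ℝ m.1 v : ℝ) - G''| ≤ m.2} :=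
    smallF_line v hv G'' (fun m hm => hm)
  have hbig := htail (G'' + 1) ε' (2 * |S| + 2) hε'pos
  refine bigF_subset_union hbig ?_ hLset
  rintro m ⟨hmD, hmtail⟩
  simp only [Set.mem_setOf_eq] at hmtail
  obtain ⟨hmX, hS, hr, hdir⟩ := hmD
  have hη : G'' + 1 ≤ (inner ℝ m.1 v : ℝ) := by rw [hcoord]; exact hmtail
  rcases le_or_gt ((inner ℝ m.1 v : ℝ) - m.2) G'' with hcase | hcase
  · left
    simp only [Set.mem_setOf_eq]
    rw [abs_of_nonneg (by linarith)]
    linarith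
  · right
    have hsl := s_lb hu (min_le_right (ε/4) (1/2:ℝ)) hdir
    have hη2 : (inner ℝ m.1 v : ℝ) ≤ ε' * ‖m.1‖ := by
      have hwv : (inner ℝ m.1 v : ℝ) = inner ℝ (m.1 - ‖m.1‖ • u) v := by
        rw [inner_decomp, hovv]; ring
      calc (inner ℝ m.1 v : ℝ) ≤ |(inner ℝ m.1 v : ℝ)| := le_abs_self _
        _ = |(inner ℝ (m.1 - ‖m.1‖ • u) v : ℝ)| := by rw [hwv]
        _ ≤ ‖m.1 - ‖m.1‖ • u‖ * ‖v‖ := abs_real_inner_le_norm _ _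
        _ ≤ ε' * ‖m.1‖ := by rw [hv, mul_one]; exact hdir
    have hG0 : (0:ℝ) ≤ G'' := le_max_right _ _
    refine ⟨hmX, by linarith, by have : G ≤ G'' := le_max_left _ _; linarith, ?_, ?_⟩
    · have hε4 : ε' ≤ ε / 4 := min_le_left _ _
      have hnn : (0:ℝ) ≤ ‖m.1‖ := norm_nonneg _
      nlinarith [hsl.1, hsl.2]
    · have habs' : |S| + 1 ≤ ‖m.1‖ / 2 := by linarith
      calc S ≤ |S| := le_abs_self _
        _ ≤ ‖m.1‖ / 2 := by linarith
        _ ≤ _ := hsl.1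

lemma master {F : Set Memb} (hF : BigF F) (hFr : ∀ m ∈ F, 0 < m.2) :
    (∃ X p u v, X ⊆ F ∧ ‖u‖ = 1 ∧ ‖v‖ = 1 ∧
      ∀ ε δ, 0 < ε → 0 < δ → BigF (WinB X p u v ε δ)) ∨
    (∃ X p u v, X ⊆ F ∧ ‖u‖ = 1 ∧ ‖v‖ = 1 ∧
      ∀ γ S, 0 < γ → BigF (WinH X p u v γ S)) ∨
    (∃ X u v, X ⊆ F ∧ ‖u‖ = 1 ∧ ‖v‖ = 1 ∧
      ∀ G ε S, 0 < ε → BigF (WinP X u v G ε S)) := by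
  by_cases hbd : ∃ R : ℝ, BigF {m ∈ F | ‖m.1‖ ≤ R}
  · obtain ⟨R, hXbig⟩ := hbd
    set X := {m ∈ F | ‖m.1‖ ≤ R} with hX
    have hXF : X ⊆ F := fun m hm => hm.1
    obtain ⟨p, hp⟩ := cond_point hXbig (fun m hm => hm.2)
    obtain ⟨u, hu, hC⟩ := cond_dir_bounded hp (fun m hm => hFr m (hXF hm))
    obtain ⟨v, hv, hW⟩ := outB_of_cond hu hC
    exact Or.inl ⟨X, p, u, v, hXF, hu, hv, hW⟩
  · push_neg at hbd
    have hfar : ∀ R : ℝ, BigF {m ∈ F | R < ‖m.1‖} := by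
      intro R
      refine bigF_subset_union hF ?_ (not_not.1 (hbd R))
      intro m hm
      rcases le_or_gt ‖m.1‖ R with hc | hc
      · exact Or.inl ⟨hm, hc⟩
      · exact Or.inr ⟨hm, hc⟩
    obtain ⟨u, hu, hD⟩ := cond_dir_far hFr hfar
    obtain ⟨v₀, hv₀, hov⟩ := exists_unit_orthogonal u
    rcases cond_offset v₀ hD with ⟨h, hDh⟩ | ⟨σ, hσ, htail⟩
    · obtain ⟨p, v, hv, hW⟩ := outH_of hu v₀ hv₀ hov h hDh
      exact Or.inr (Or.inl ⟨F, p, u, v, le_refl F, hu, hv, hW⟩)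
    · obtain ⟨v, hv, hW⟩ := outP_of hu v₀ hv₀ hov σ hσ htail
      exact Or.inr (Or.inr ⟨F, u, v, le_refl F, hu, hv, hW⟩)

-- Case B arithmetic: member 1 has smallest abscissa (latest), member 3 largest (earliest).
lemma arithB (S1 E1 R1 S2 E2 R2 S3 E3 R3 a1 b1 a2 b2 a3 b3 : ℝ)
    (h1 : 0 < S1) (h2 : 0 < S2) (h3 : 0 < S3)
    (hr1 : 0 ≤ R1) (hr2 : 0 ≤ R2) (hr3 : 0 ≤ R3)
    (he1 : R1 < E1) (he2 : R2 < E2) (he3 : R3 < E3)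
    (hs1 : 100 * (E1 + R1) ≤ S1) (hs2 : 100 * (E2 + R2) ≤ S2)
    (hs3 : 100 * (E3 + R3) ≤ S3)
    (p32 : 4 * S2 ≤ S3) (q32 : 200 * S3 * (E2 + R2) ≤ (E3 - R3) * S2)
    (p21 : 4 * S1 ≤ S2) (q21 : 200 * S2 * (E1 + R1) ≤ (E2 - R2) * S1)
    (ha1 : |a1 - S1| ≤ R1) (hb1 : |b1 - E1| ≤ R1)
    (ha2 : |a2 - S2| ≤ R2) (hb2 : |b2 - E2| ≤ R2)
    (ha3 : |a3 - S3| ≤ R3) (hb3 : |b3 - E3| ≤ R3)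
    (heq : (b2 - b1) * (a3 - a2) = (b3 - b2) * (a2 - a1)) : False := by
  obtain ⟨ha1l, ha1u⟩ := abs_le.1 ha1
  obtain ⟨hb1l, hb1u⟩ := abs_le.1 hb1
  obtain ⟨ha2l, ha2u⟩ := abs_le.1 ha2
  obtain ⟨hb2l, hb2u⟩ := abs_le.1 hb2
  obtain ⟨ha3l, ha3u⟩ := abs_le.1 ha3
  obtain ⟨hb3l, hb3u⟩ := abs_le.1 hb3
  -- smallness of later levels relative to earlier gaps
  have hM2 : 800 * (E2 + R2) ≤ E3 - R3 := by
    have hmono := mul_le_mul_of_nonneg_left p32 (by linarith : (0:ℝ) ≤ 200 * (E2 + R2))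
    have h1' : 800 * (E2 + R2) * S2 ≤ (E3 - R3) * S2 := by nlinarith [q32]
    exact le_of_mul_le_mul_right h1' h2
  have hM1 : 800 * (E1 + R1) ≤ E2 - R2 := by
    have hmono := mul_le_mul_of_nonneg_left p21 (by linarith : (0:ℝ) ≤ 200 * (E1 + R1))
    have h1' : 800 * (E1 + R1) * S1 ≤ (E2 - R2) * S1 := by nlinarith [q21]
    exact le_of_mul_le_mul_right h1' h1
  -- abscissa differences
  have hd21 : S2 / 2 ≤ a2 - a1 := by linarith
  have hd32 : S3 / 2 ≤ a3 - a2 := by linarith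
  have hu32 : a3 - a2 ≤ 2 * S3 := by linarith
  -- ordinate differences
  have hbd21 : 0 ≤ b2 - b1 := by linarith
  have hbu21 : b2 - b1 ≤ E2 + R2 := by linarith
  have hbd32 : (E3 - R3) / 2 ≤ b3 - b2 := by linarith
  -- products
  have P1 : (b2 - b1) * (a3 - a2) ≤ (E2 + R2) * (2 * S3) :=
    mul_le_mul hbu21 hu32 (by linarith) (by linarith)
  have P2 : ((E3 - R3) / 2) * (S2 / 2) ≤ (b3 - b2) * (a2 - a1) :=
    mul_le_mul hbd32 hd21 (by linarith) (by linarith)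
  nlinarith [P1, P2, q32, heq, mul_pos (by linarith : (0:ℝ) < E3 - R3) h2]

-- Case H arithmetic: abscissas increasing, ordinates decreasing to 0.
lemma arithH (S1 E1 R1 S2 E2 R2 S3 E3 R3 a1 b1 a2 b2 a3 b3 : ℝ)
    (h1 : 4 ≤ S1) (h2 : 4 ≤ S2) (h3 : 4 ≤ S3)
    (hr1 : 0 ≤ R1) (hr2 : 0 ≤ R2) (hr3 : 0 ≤ R3)
    (he1 : R1 < E1) (he2 : R2 < E2) (he3 : R3 < E3)
    (hE1 : E1 ≤ 1) (hE2 : E2 ≤ 1) (hE3 : E3 ≤ 1)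
    (p12 : 4 * S1 ≤ S2) (p23 : 4 * S2 ≤ S3)
    (g12 : 4 * E2 ≤ E1 - R1) (g23 : 4 * E3 ≤ E2 - R2)
    (g13 : 4 * E3 ≤ E1 - R1)
    (w23 : 32 * S2 * E2 ≤ (E2 - R2) * S3)
    (w13 : 32 * S2 * E2 ≤ (E1 - R1) * S3)
    (ha1 : |a1 - S1| ≤ R1) (hb1 : |b1 - E1| ≤ R1)
    (ha2 : |a2 - S2| ≤ R2) (hb2 : |b2 - E2| ≤ R2)
    (ha3 : |a3 - S3| ≤ R3) (hb3 : |b3 - E3| ≤ R3)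
    (heq : (b2 - b1) * (a3 - a2) = (b3 - b2) * (a2 - a1)) : False := by
  obtain ⟨ha1l, ha1u⟩ := abs_le.1 ha1
  obtain ⟨hb1l, hb1u⟩ := abs_le.1 hb1
  obtain ⟨ha2l, ha2u⟩ := abs_le.1 ha2
  obtain ⟨hb2l, hb2u⟩ := abs_le.1 hb2
  obtain ⟨ha3l, ha3u⟩ := abs_le.1 ha3
  obtain ⟨hb3l, hb3u⟩ := abs_le.1 hb3
  -- radii at most 1
  have hR1 : R1 ≤ 1 := by linarith
  have hR2 : R2 ≤ 1 := by linarith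
  -- abscissa differences
  have hd21 : S2 / 4 ≤ a2 - a1 := by linarith
  have hu21 : a2 - a1 ≤ 2 * S2 := by linarith
  have hd32 : S3 / 4 ≤ a3 - a2 := by linarith
  -- ordinate differences (negative slopes)
  have hbu21 : b2 - b1 ≤ -((E1 - R1) / 2) := by linarith
  have hbd32 : -(2 * E2) ≤ b3 - b2 := by linarith
  -- LHS ≤ -(E1-R1)/2 * S3/4 ; RHS ≥ -(2 E2)(2 S2)
  have P1 : (b2 - b1) * (a3 - a2) ≤ (-((E1 - R1) / 2)) * (S3 / 4) := by
    have hneg : b2 - b1 ≤ 0 := by nlinarith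
    nlinarith [mul_le_mul_of_nonneg_right hbu21 (by linarith : (0:ℝ) ≤ a3 - a2),
      mul_le_mul_of_nonneg_left hd32 (by linarith : (0:ℝ) ≤ (E1 - R1) / 2)]
  have P2 : (-(2 * E2)) * (2 * S2) ≤ (b3 - b2) * (a2 - a1) := by
    nlinarith [mul_le_mul_of_nonneg_right hbd32 (by linarith : (0:ℝ) ≤ a2 - a1),
      mul_le_mul_of_nonneg_left hu21 (by linarith : (0:ℝ) ≤ 2 * E2)]
  -- key: (E1-R1) * S3 ≥ 32 S2 E2, so  (E1-R1)/2 * S3/4 > 4 E2 S2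
  nlinarith [P1, P2, w13, heq, mul_pos (by linarith : (0:ℝ) < E2) (by linarith : (0:ℝ) < S2)]

-- Case P arithmetic: abscissas increasing, ordinates increasing with growing gaps.
lemma arithP (S1 E1 R1 S2 E2 R2 S3 E3 R3 a1 b1 a2 b2 a3 b3 : ℝ)
    (h1 : 0 < S1) (h2 : 0 < S2) (h3 : 0 < S3)
    (hr1 : 0 ≤ R1) (hr2 : 0 ≤ R2) (hr3 : 0 ≤ R3)
    (he1 : R1 < E1) (he2 : R2 < E2) (he3 : R3 < E3)
    (hs1 : 100 * (E1 + R1) ≤ S1) (hs2 : 100 * (E2 + R2) ≤ S2)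
    (hs3 : 100 * (E3 + R3) ≤ S3)
    (p12 : 4 * S1 ≤ S2) (p23 : 4 * S2 ≤ S3)
    (gap2 : 2 * (E1 + R1) ≤ E2 - R2) (gap3 : 2 * (E2 + R2) ≤ E3 - R3)
    (w23 : 32 * (E3 + R3) * S2 ≤ (E2 - R2) * S3)
    (ha1 : |a1 - S1| ≤ R1) (hb1 : |b1 - E1| ≤ R1)
    (ha2 : |a2 - S2| ≤ R2) (hb2 : |b2 - E2| ≤ R2)
    (ha3 : |a3 - S3| ≤ R3) (hb3 : |b3 - E3| ≤ R3)
    (heq : (b2 - b1) * (a3 - a2) = (b3 - b2) * (a2 - a1)) : False := by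
  obtain ⟨ha1l, ha1u⟩ := abs_le.1 ha1
  obtain ⟨hb1l, hb1u⟩ := abs_le.1 hb1
  obtain ⟨ha2l, ha2u⟩ := abs_le.1 ha2
  obtain ⟨hb2l, hb2u⟩ := abs_le.1 hb2
  obtain ⟨ha3l, ha3u⟩ := abs_le.1 ha3
  obtain ⟨hb3l, hb3u⟩ := abs_le.1 hb3
  -- abscissa differences
  have hd21 : S2 / 2 ≤ a2 - a1 := by linarith
  have hu21 : a2 - a1 ≤ 2 * S2 := by linarith
  have hd32 : S3 / 2 ≤ a3 - a2 := by linarith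
  -- ordinate differences (positive slopes)
  have hbd21 : (E2 - R2) / 2 ≤ b2 - b1 := by linarith
  have hbu32 : b3 - b2 ≤ E3 + R3 := by linarith
  have hbd32 : 0 ≤ b3 - b2 := by linarith
  have P1 : ((E2 - R2) / 2) * (S3 / 2) ≤ (b2 - b1) * (a3 - a2) :=
    mul_le_mul hbd21 hd32 (by linarith) (by linarith)
  have P2 : (b3 - b2) * (a2 - a1) ≤ (E3 + R3) * (2 * S2) :=
    mul_le_mul hbu32 hu21 (by linarith) (by linarith)
  nlinarith [P1, P2, w23, heq, mul_pos (by linarith : (0:ℝ) < E2 - R2) h3]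

lemma exists_chain {α : Type*} {P : α → Prop} {Q : α → α → Prop}
    (h0 : ∃ a, P a) (hstep : ∀ a, P a → ∃ b, P b ∧ Q a b) :
    ∃ f : ℕ → α, (∀ n, P (f n)) ∧ ∀ n, Q (f n) (f (n + 1)) := by
  classical
  let T := {a : α // P a}
  let step : T → T := fun x => ⟨(hstep x.1 x.2).choose, (hstep x.1 x.2).choose_spec.1⟩
  let start : T := ⟨h0.choose, h0.choose_spec⟩
  refine ⟨fun n => (step^[n] start).1, fun n => (step^[n] start).2, fun n => ?_⟩
  simp only [Function.iterate_succ_apply']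
  exact (hstep (step^[n] start).1 (step^[n] start).2).choose_spec.2

lemma collinear_three_of_line (L : AffineSubspace ℝ Pl) (hL : IsLine L) {x y z : Pl}
    (hx : x ∈ (L : Set Pl)) (hy : y ∈ (L : Set Pl)) (hz : z ∈ (L : Set Pl)) :
    Collinear ℝ ({x, y, z} : Set Pl) := by
  rw [collinear_iff_rank_le_one]
  have hsub : ({x, y, z} : Set Pl) ⊆ (L : Set Pl) := by
    rintro w (rfl | rfl | rfl) <;> assumption
  have h1 : vectorSpan ℝ ({x, y, z} : Set Pl) ≤ L.direction := by
    rw [AffineSubspace.direction_eq_vectorSpan]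
    exact vectorSpan_mono ℝ hsub
  have h2 := Submodule.rank_mono h1
  have h3 : Module.rank ℝ L.direction = 1 := by
    rw [← Module.finrank_eq_rank, hL.2, Nat.cast_one]
  exact h2.trans (le_of_eq h3)

-- sorted index helper
lemma three_sorted {a b c : ℕ} (hab : a ≠ b) (hac : a ≠ c) (hbc : b ≠ c)
    (Pr : ℕ → Prop) (ha : Pr a) (hb : Pr b) (hc : Pr c) :
    ∃ i j k, i < j ∧ j < k ∧ Pr i ∧ Pr j ∧ Pr k := by
  rcases lt_trichotomy a b with h1 | h1 | h1
  · rcases lt_trichotomy b c with h2 | h2 | h2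
    · exact ⟨a, b, c, h1, h2, ha, hb, hc⟩
    · exact absurd h2 hbc
    · rcases lt_trichotomy a c with h3 | h3 | h3
      · exact ⟨a, c, b, h3, h2, ha, hc, hb⟩
      · exact absurd h3 hac
      · exact ⟨c, a, b, h3, h1, hc, ha, hb⟩
  · exact absurd h1 hab
  · rcases lt_trichotomy a c with h2 | h2 | h2
    · exact ⟨b, a, c, h1, h2, hb, ha, hc⟩
    · exact absurd h2 hac
    · rcases lt_trichotomy b c with h3 | h3 | h3
      · exact ⟨b, c, a, h3, h2, hb, hc, ha⟩
      · exact absurd h3 hbc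
      · exact ⟨c, b, a, h3, h1, hc, hb, ha⟩

lemma coord_bound {w : Pl} (hw : ‖w‖ = 1) (p : Pl) {m : Memb} {x : Pl}
    (hx : x ∈ Metric.closedBall m.1 m.2) :
    |(inner ℝ (x - p) w : ℝ) - inner ℝ (m.1 - p) w| ≤ m.2 := by
  rw [show (inner ℝ (x - p) w : ℝ) - inner ℝ (m.1 - p) w = inner ℝ (x - m.1) w by
    rw [← inner_sub_left]; congr 1; abel]
  calc |(inner ℝ (x - m.1) w : ℝ)| ≤ ‖x - m.1‖ * ‖w‖ := abs_real_inner_le_norm _ _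
    _ ≤ m.2 := by
        rw [hw, mul_one, ← dist_eq_norm]
        exact Metric.mem_closedBall.1 hx

lemma caseB_seq {X : Set Memb} {p u v : Pl} (hu : ‖u‖ = 1) (hv : ‖v‖ = 1)
    (hXr : ∀ m ∈ X, 0 < m.2)
    (hW : ∀ ε δ, 0 < ε → 0 < δ → BigF (WinB X p u v ε δ)) :
    ∃ f : ℕ → Memb, (∀ n, f n ∈ X) ∧ Function.Injective f ∧
      ∀ i j k, i < j → j < k → ∀ x y z : Pl, x ∈ Metric.closedBall (f i).1 (f i).2 →
        y ∈ Metric.closedBall (f j).1 (f j).2 → z ∈ Metric.closedBall (f k).1 (f k).2 →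
        ¬ Collinear ℝ ({x, y, z} : Set Pl) := by
  classical
  set sc : Memb → ℝ := fun m => inner ℝ (m.1 - p) u with hsc
  set et : Memb → ℝ := fun m => inner ℝ (m.1 - p) v with het
  set P : Memb → Prop := fun m => m ∈ X ∧ 0 < sc m ∧ m.2 < et m ∧
    100 * (et m + m.2) ≤ sc m with hP
  set Q : Memb → Memb → Prop := fun a b => 4 * sc b ≤ sc a ∧
    200 * sc a * (et b + b.2) ≤ (et a - a.2) * sc b with hQ
  have h0 : ∃ a, P a := by
    obtain ⟨m, hm⟩ := bigF_nonempty (hW (1/200) 1 (by norm_num) one_pos)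
    obtain ⟨hmX, hm1, hm2, hm3, hm4, hm5⟩ := hm
    exact ⟨m, hmX, hm4, hm1, by linarith⟩
  have hstep : ∀ a, P a → ∃ b, P b ∧ Q a b := by
    rintro a ⟨haX, has, har, hasum⟩
    have hg : 0 < et a - a.2 := by linarith
    set ε' := min (1/200) ((et a - a.2) / (800 * sc a)) with hε'
    have hε'pos : 0 < ε' := lt_min (by norm_num) (div_pos hg (by linarith))
    obtain ⟨b, hb⟩ := bigF_nonempty (hW ε' (sc a / 4) hε'pos (by linarith))
    obtain ⟨hbX, hb1, hb2, hb3, hb4, hb5⟩ := hb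
    have hb1' : b.2 < et b := hb1
    have hb2' : et b ≤ ε' * sc b := hb2
    have hb3' : b.2 ≤ ε' * sc b := hb3
    have hb4' : 0 < sc b := hb4
    have hb5' : sc b ≤ sc a / 4 := hb5
    have hkey : sc a * ε' ≤ (et a - a.2) / 800 := by
      rcases le_or_gt (1/200 : ℝ) ((et a - a.2) / (800 * sc a)) with hcase | hcase
      · have hmin : ε' = 1/200 := min_eq_left hcase
        have h4 : 4 * sc a ≤ et a - a.2 := by
          have := (le_div_iff₀ (by linarith : (0:ℝ) < 800 * sc a)).1 hcase
          linarith
        rw [hmin]; linarith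
      · have hmin : ε' = (et a - a.2) / (800 * sc a) := min_eq_right hcase.le
        rw [hmin, show sc a * ((et a - a.2) / (800 * sc a)) = (et a - a.2) / 800 from by
          field_simp]
    have hεb : 200 * ε' ≤ 1 := by
      have := min_le_left (1/200 : ℝ) ((et a - a.2) / (800 * sc a))
      rw [hε']; linarith
    have hPb : 100 * (et b + b.2) ≤ sc b := by
      nlinarith [mul_nonneg (by linarith : (0:ℝ) ≤ 1 - 200 * ε') hb4'.le]
    refine ⟨b, ⟨hbX, hb4', hb1', hPb⟩, by linarith, ?_⟩
    -- 200 * sc a * (et b + b.2) ≤ (et a - a.2) * sc b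
    have hsum : et b + b.2 ≤ 2 * ε' * sc b := by linarith
    have h2 : 200 * sc a * (et b + b.2) ≤ 400 * (sc a * ε') * sc b := by
      nlinarith [mul_le_mul_of_nonneg_left hsum (by linarith : (0:ℝ) ≤ 200 * sc a)]
    have h3 : 400 * (sc a * ε') * sc b ≤ 400 * ((et a - a.2)/800) * sc b := by
      nlinarith [mul_le_mul_of_nonneg_right hkey (by linarith : (0:ℝ) ≤ 400 * sc b)]
    nlinarith [mul_nonneg (by linarith : (0:ℝ) ≤ et a - a.2) hb4'.le]
  obtain ⟨f, hPf, hQf⟩ := exists_chain h0 hstep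
  have hsdec : ∀ n, sc (f (n+1)) < sc (f n) := by
    intro n
    have := (hQf n).1
    have := (hPf (n+1)).2.1
    linarith
  have hmono : ∀ i j, i < j → sc (f j) < sc (f i) := by
    intro i j hij
    induction j with
    | zero => omega
    | succ n ih =>
        rcases Nat.lt_succ_iff_lt_or_eq.1 hij with h | h
        · exact (hsdec n).trans (ih h)
        · rw [← h]; exact hsdec i
  have hinj : Function.Injective f := by
    intro a b hab
    by_contra hne
    rcases Nat.lt_or_ge a b with h | h
    · have := hmono a b h; rw [hab] at this; exact lt_irrefl _ this
    · have hba : b < a := lt_of_le_of_ne h (Ne.symm hne)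
      have := hmono b a hba; rw [hab] at this; exact lt_irrefl _ this
  -- pairwise facts
  have hpair : ∀ i j, i < j → 4 * sc (f j) ≤ sc (f i) ∧
      200 * sc (f i) * (et (f j) + (f j).2) ≤ (et (f i) - (f i).2) * sc (f j) := by
    intro i j hij
    induction j with
    | zero => omega
    | succ n ih =>
        rcases Nat.lt_succ_iff_lt_or_eq.1 hij with h | h
        · obtain ⟨ih1, ih2⟩ := ih h
          obtain ⟨q1, q2⟩ := hQf n
          have hsi := (hPf i).2.1
          have hsn := (hPf n).2.1
          have hsn1 := (hPf (n+1)).2.1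
          have hrn : 0 ≤ (f n).2 := (hXr _ (hPf n).1).le
          have hrn1 : 0 ≤ (f (n+1)).2 := (hXr _ (hPf (n+1)).1).le
          have hgn : 0 < et (f n) - (f n).2 := by have := (hPf n).2.2.1; linarith
          have hgi : 0 < et (f i) - (f i).2 := by have := (hPf i).2.2.1; linarith
          constructor
          · linarith
          · -- chain the two product inequalities
            have hgT : et (f n) - (f n).2 ≤ et (f n) + (f n).2 := by linarith
            have hC : 200 * sc (f i) * (et (f n) - (f n).2) ≤
                (et (f i) - (f i).2) * sc (f n) := by
              nlinarith [mul_le_mul_of_nonneg_left hgT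
                (by linarith : (0:ℝ) ≤ 200 * sc (f i))]
            have hA : 200 * sc (f i) * (200 * sc (f n) * (et (f (n+1)) + (f (n+1)).2)) ≤
                200 * sc (f i) * ((et (f n) - (f n).2) * sc (f (n+1))) :=
              mul_le_mul_of_nonneg_left q2 (by linarith : (0:ℝ) ≤ 200 * sc (f i))
            have hE : (200 * sc (f i) * (et (f (n+1)) + (f (n+1)).2)) * (200 * sc (f n)) ≤
                ((et (f i) - (f i).2) * sc (f (n+1))) * (200 * sc (f n)) := by
              nlinarith [hA, mul_le_mul_of_nonneg_right hC hsn1.le,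
                mul_nonneg (mul_nonneg hgi.le hsn.le) hsn1.le]
            exact le_of_mul_le_mul_right hE (by linarith)
        · rw [← h]; exact hQf i
  refine ⟨f, fun n => (hPf n).1, hinj, ?_⟩
  intro i j k hij hjk x y z hx hy hz hcol
  have heq := collinear_det u v hcol
  -- coordinates
  have hax := coord_bound hu p hx
  have hbx := coord_bound hv p hx
  have hay := coord_bound hu p hy
  have hby := coord_bound hv p hy
  have haz := coord_bound hu p hz
  have hbz := coord_bound hv p hz
  have hik : i < k := hij.trans hjk
  obtain ⟨pji, qji⟩ := hpair i j hij
  obtain ⟨pkj, qkj⟩ := hpair j k hjk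
  have hPi := hPf i
  have hPj := hPf j
  have hPk := hPf k
  have heq2 : ((inner ℝ (y - p) v : ℝ) - inner ℝ (z - p) v) *
        ((inner ℝ (x - p) u : ℝ) - inner ℝ (y - p) u)
      = ((inner ℝ (x - p) v : ℝ) - inner ℝ (y - p) v) *
        ((inner ℝ (y - p) u : ℝ) - inner ℝ (z - p) u) := by
    have e1 : (inner ℝ (y - x) v : ℝ) = inner ℝ (y - p) v - inner ℝ (x - p) v := by
      rw [← inner_sub_left]; congr 1; abel
    have e2 : (inner ℝ (z - y) u : ℝ) = inner ℝ (z - p) u - inner ℝ (y - p) u := by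
      rw [← inner_sub_left]; congr 1; abel
    have e3 : (inner ℝ (z - y) v : ℝ) = inner ℝ (z - p) v - inner ℝ (y - p) v := by
      rw [← inner_sub_left]; congr 1; abel
    have e4 : (inner ℝ (y - x) u : ℝ) = inner ℝ (y - p) u - inner ℝ (x - p) u := by
      rw [← inner_sub_left]; congr 1; abel
    rw [e1, e2, e3, e4] at heq
    linear_combination -heq
  exact arithB (sc (f k)) (et (f k)) ((f k).2) (sc (f j)) (et (f j)) ((f j).2)
    (sc (f i)) (et (f i)) ((f i).2)
    (inner ℝ (z - p) u) (inner ℝ (z - p) v) (inner ℝ (y - p) u) (inner ℝ (y - p) v)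
    (inner ℝ (x - p) u) (inner ℝ (x - p) v)
    hPk.2.1 hPj.2.1 hPi.2.1
    (hXr _ hPk.1).le (hXr _ hPj.1).le (hXr _ hPi.1).le
    hPk.2.2.1 hPj.2.2.1 hPi.2.2.1
    hPk.2.2.2 hPj.2.2.2 hPi.2.2.2
    pji qji pkj qkj
    haz hbz hay hby hax hbx heq2

lemma caseH_seq {X : Set Memb} {p u v : Pl} (hu : ‖u‖ = 1) (hv : ‖v‖ = 1)
    (hXr : ∀ m ∈ X, 0 < m.2)
    (hW : ∀ γ S, 0 < γ → BigF (WinH X p u v γ S)) :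
    ∃ f : ℕ → Memb, (∀ n, f n ∈ X) ∧ Function.Injective f ∧
      ∀ i j k, i < j → j < k → ∀ x y z : Pl, x ∈ Metric.closedBall (f i).1 (f i).2 →
        y ∈ Metric.closedBall (f j).1 (f j).2 → z ∈ Metric.closedBall (f k).1 (f k).2 →
        ¬ Collinear ℝ ({x, y, z} : Set Pl) := by
  classical
  set sc : Memb → ℝ := fun m => inner ℝ (m.1 - p) u with hsc
  set et : Memb → ℝ := fun m => inner ℝ (m.1 - p) v with het
  set P : Memb → Prop := fun m => m ∈ X ∧ m.2 < et m ∧ et m ≤ 1 ∧ 4 ≤ sc m with hP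
  set Q : Memb → Memb → Prop := fun a b => 4 * sc a ≤ sc b ∧
    4 * et b ≤ et a - a.2 ∧ 32 * sc a * et a ≤ (et a - a.2) * sc b with hQ
  have h0 : ∃ a, P a := by
    obtain ⟨m, hm⟩ := bigF_nonempty (hW 1 4 one_pos)
    obtain ⟨hmX, hm1, hm2, hm3⟩ := hm
    exact ⟨m, hmX, hm1, hm2, hm3⟩
  have hstep : ∀ a, P a → ∃ b, P b ∧ Q a b := by
    rintro a ⟨haX, har, hE1a, hS4⟩
    have hra : 0 < a.2 := hXr a haX
    have hg : 0 < et a - a.2 := by linarith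
    have hsa : 0 < sc a := by linarith
    have hea : 0 < et a := by linarith
    set γ' := min 1 ((et a - a.2) / 4) with hγ'
    have hγ'pos : 0 < γ' := lt_min one_pos (by linarith)
    set Spar := max (4 * sc a) ((32 * sc a * et a) / (et a - a.2)) with hSpar
    obtain ⟨b, hb⟩ := bigF_nonempty (hW γ' Spar hγ'pos)
    obtain ⟨hbX, hb1, hb2, hb3⟩ := hb
    have hb1' : b.2 < et b := hb1
    have hb2' : et b ≤ γ' := hb2
    have hb3' : Spar ≤ sc b := hb3
    have hq1 : 4 * sc a ≤ sc b := le_trans (le_max_left _ _) hb3'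
    have hq2 : 4 * et b ≤ et a - a.2 := by
      have : γ' ≤ (et a - a.2) / 4 := min_le_right _ _
      linarith
    have hq3 : 32 * sc a * et a ≤ (et a - a.2) * sc b := by
      have h1 : (32 * sc a * et a) / (et a - a.2) ≤ sc b := le_trans (le_max_right _ _) hb3'
      have := (div_le_iff₀ hg).1 h1
      linarith [this]
    exact ⟨b, ⟨hbX, hb1', le_trans hb2' (min_le_left _ _), by linarith⟩, hq1, hq2, hq3⟩
  obtain ⟨f, hPf, hQf⟩ := exists_chain h0 hstep
  have hsinc : ∀ n, sc (f n) < sc (f (n + 1)) := by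
    intro n
    have := (hQf n).1
    have := (hPf n).2.2.2
    linarith
  have hmono : ∀ i j, i < j → sc (f i) < sc (f j) := by
    intro i j hij
    induction j with
    | zero => omega
    | succ n ih =>
        rcases Nat.lt_succ_iff_lt_or_eq.1 hij with h | h
        · exact (ih h).trans (hsinc n)
        · rw [← h]; exact hsinc i
  have hinj : Function.Injective f := by
    intro a b hab
    by_contra hne
    rcases Nat.lt_or_ge a b with h | h
    · have := hmono a b h; rw [hab] at this; exact lt_irrefl _ this
    · have hba : b < a := lt_of_le_of_ne h (Ne.symm hne)
      have := hmono b a hba; rw [hab] at this; exact lt_irrefl _ this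
  have hpair : ∀ i j, i < j → 4 * sc (f i) ≤ sc (f j) ∧
      4 * et (f j) ≤ et (f i) - (f i).2 ∧
      32 * sc (f i) * et (f i) ≤ (et (f i) - (f i).2) * sc (f j) := by
    intro i j hij
    induction j with
    | zero => omega
    | succ n ih =>
        rcases Nat.lt_succ_iff_lt_or_eq.1 hij with h | h
        · obtain ⟨ih1, ih2, ih3⟩ := ih h
          obtain ⟨q1, q2, q3⟩ := hQf n
          have hSi := (hPf i).2.2.2
          have hSn := (hPf n).2.2.2
          have hrn : 0 < (f n).2 := hXr _ (hPf n).1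
          have hri : 0 < (f i).2 := hXr _ (hPf i).1
          have hgi : 0 < et (f i) - (f i).2 := by have := (hPf i).2.1; linarith
          have hgn : 0 < et (f n) - (f n).2 := by have := (hPf n).2.1; linarith
          refine ⟨by linarith, by linarith, ?_⟩
          have hSmono : sc (f n) ≤ sc (f (n+1)) := by linarith
          nlinarith [mul_le_mul_of_nonneg_left hSmono hgi.le]
        · rw [← h]; exact hQf i
  refine ⟨f, fun n => (hPf n).1, hinj, ?_⟩
  intro i j k hij hjk x y z hx hy hz hcol
  have heq := collinear_det u v hcol
  have hax := coord_bound hu p hx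
  have hbx := coord_bound hv p hx
  have hay := coord_bound hu p hy
  have hby := coord_bound hv p hy
  have haz := coord_bound hu p hz
  have hbz := coord_bound hv p hz
  have hik : i < k := hij.trans hjk
  obtain ⟨aij, bij, cij⟩ := hpair i j hij
  obtain ⟨ajk, bjk, cjk⟩ := hpair j k hjk
  obtain ⟨aik, bik, cik⟩ := hpair i k hik
  have hPi := hPf i
  have hPj := hPf j
  have hPk := hPf k
  have hri : 0 < (f i).2 := hXr _ hPi.1
  have hrj : 0 < (f j).2 := hXr _ hPj.1
  have hrk : 0 < (f k).2 := hXr _ hPk.1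
  have hgi : 0 < et (f i) - (f i).2 := by have := hPi.2.1; linarith
  have hgj : 0 < et (f j) - (f j).2 := by have := hPj.2.1; linarith
  have hSk : 4 ≤ sc (f k) := hPk.2.2.2
  have w13 : 32 * sc (f j) * et (f j) ≤ (et (f i) - (f i).2) * sc (f k) := by
    have h1 : (et (f j) - (f j).2) * sc (f k) ≤ et (f j) * sc (f k) := by nlinarith
    have h2 : 4 * et (f j) * sc (f k) ≤ (et (f i) - (f i).2) * sc (f k) := by nlinarith
    nlinarith
  have heq2 : ((inner ℝ (y - p) v : ℝ) - inner ℝ (x - p) v) *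
        ((inner ℝ (z - p) u : ℝ) - inner ℝ (y - p) u)
      = ((inner ℝ (z - p) v : ℝ) - inner ℝ (y - p) v) *
        ((inner ℝ (y - p) u : ℝ) - inner ℝ (x - p) u) := by
    have e1 : (inner ℝ (y - x) v : ℝ) = inner ℝ (y - p) v - inner ℝ (x - p) v := by
      rw [← inner_sub_left]; congr 1; abel
    have e2 : (inner ℝ (z - y) u : ℝ) = inner ℝ (z - p) u - inner ℝ (y - p) u := by
      rw [← inner_sub_left]; congr 1; abel
    have e3 : (inner ℝ (z - y) v : ℝ) = inner ℝ (z - p) v - inner ℝ (y - p) v := by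
      rw [← inner_sub_left]; congr 1; abel
    have e4 : (inner ℝ (y - x) u : ℝ) = inner ℝ (y - p) u - inner ℝ (x - p) u := by
      rw [← inner_sub_left]; congr 1; abel
    rw [e1, e2, e3, e4] at heq
    linear_combination heq
  exact arithH (sc (f i)) (et (f i)) ((f i).2) (sc (f j)) (et (f j)) ((f j).2)
    (sc (f k)) (et (f k)) ((f k).2)
    (inner ℝ (x - p) u) (inner ℝ (x - p) v) (inner ℝ (y - p) u) (inner ℝ (y - p) v)
    (inner ℝ (z - p) u) (inner ℝ (z - p) v)
    hPi.2.2.2 hPj.2.2.2 hPk.2.2.2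
    hri.le hrj.le hrk.le
    hPi.2.1 hPj.2.1 hPk.2.1
    hPi.2.2.1 hPj.2.2.1 hPk.2.2.1
    aij ajk bij bjk bik cjk w13
    hax hbx hay hby haz hbz heq2

lemma caseP_seq {X : Set Memb} {u v : Pl} (hu : ‖u‖ = 1) (hv : ‖v‖ = 1)
    (hXr : ∀ m ∈ X, 0 < m.2)
    (hW : ∀ G ε S, 0 < ε → BigF (WinP X u v G ε S)) :
    ∃ f : ℕ → Memb, (∀ n, f n ∈ X) ∧ Function.Injective f ∧
      ∀ i j k, i < j → j < k → ∀ x y z : Pl, x ∈ Metric.closedBall (f i).1 (f i).2 →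
        y ∈ Metric.closedBall (f j).1 (f j).2 → z ∈ Metric.closedBall (f k).1 (f k).2 →
        ¬ Collinear ℝ ({x, y, z} : Set Pl) := by
  classical
  set sc : Memb → ℝ := fun m => inner ℝ m.1 u with hsc
  set et : Memb → ℝ := fun m => inner ℝ m.1 v with het
  set P : Memb → Prop := fun m => m ∈ X ∧ m.2 < et m ∧
    100 * (et m + m.2) ≤ sc m ∧ 1 ≤ sc m with hP
  set Q : Memb → Memb → Prop := fun a b => 4 * sc a ≤ sc b ∧
    2 * (et a + a.2) ≤ et b - b.2 ∧ 64 * (et b + b.2) * sc a ≤ (et a - a.2) * sc b with hQ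
  have h0 : ∃ a, P a := by
    obtain ⟨m, hm⟩ := bigF_nonempty (hW 1 (1/200) 1 (by norm_num))
    obtain ⟨hmX, hm1, hm2, hm3, hm4⟩ := hm
    have hm1' : m.2 < et m := hm1
    have hm3' : et m ≤ (1/200) * sc m := hm3
    have hm4' : 1 ≤ sc m := hm4
    exact ⟨m, hmX, hm1', by nlinarith, hm4'⟩
  have hstep : ∀ a, P a → ∃ b, P b ∧ Q a b := by
    rintro a ⟨haX, har, hsum, hS1⟩
    have hra : 0 < a.2 := hXr a haX
    have hg : 0 < et a - a.2 := by linarith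
    have hsa : 0 < sc a := by linarith
    set ε' := min (1/200) ((et a - a.2) / (128 * sc a)) with hε'
    have hε'pos : 0 < ε' := lt_min (by norm_num) (div_pos hg (by linarith))
    obtain ⟨b, hb⟩ := bigF_nonempty (hW (2 * (et a + a.2)) ε' (4 * sc a) hε'pos)
    obtain ⟨hbX, hb1, hb2, hb3, hb4⟩ := hb
    have hb1' : b.2 < et b := hb1
    have hb2' : 2 * (et a + a.2) ≤ et b - b.2 := hb2
    have hb3' : et b ≤ ε' * sc b := hb3
    have hb4' : 4 * sc a ≤ sc b := hb4
    have hscb : 0 < sc b := by linarith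
    have hkey : sc a * ε' ≤ (et a - a.2) / 128 := by
      rcases le_or_gt (1/200 : ℝ) ((et a - a.2) / (128 * sc a)) with hcase | hcase
      · have hmin : ε' = 1/200 := min_eq_left hcase
        have h4 : (1/200) * (128 * sc a) ≤ et a - a.2 :=
          (le_div_iff₀ (by linarith : (0:ℝ) < 128 * sc a)).1 hcase
        rw [hmin]; linarith
      · have hmin : ε' = (et a - a.2) / (128 * sc a) := min_eq_right hcase.le
        rw [hmin, show sc a * ((et a - a.2) / (128 * sc a)) = (et a - a.2) / 128 from by
          field_simp]
    have hεb : 200 * ε' ≤ 1 := by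
      have := min_le_left (1/200 : ℝ) ((et a - a.2) / (128 * sc a))
      rw [hε']; linarith
    have hTb : et b + b.2 ≤ 2 * ε' * sc b := by linarith
    have hPb : 100 * (et b + b.2) ≤ sc b := by
      nlinarith [mul_nonneg (by linarith : (0:ℝ) ≤ 1 - 200 * ε') hscb.le]
    have hq3 : 64 * (et b + b.2) * sc a ≤ (et a - a.2) * sc b := by
      have h2' : 64 * (et b + b.2) * sc a ≤ 128 * (sc a * ε') * sc b := by
        nlinarith [mul_le_mul_of_nonneg_left hTb (by linarith : (0:ℝ) ≤ 64 * sc a)]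
      have h3' : 128 * (sc a * ε') * sc b ≤ 128 * ((et a - a.2) / 128) * sc b := by
        nlinarith [mul_le_mul_of_nonneg_right hkey (by linarith : (0:ℝ) ≤ 128 * sc b)]
      nlinarith
    exact ⟨b, ⟨hbX, hb1', hPb, by linarith⟩, hb4', hb2', hq3⟩
  obtain ⟨f, hPf, hQf⟩ := exists_chain h0 hstep
  have hsinc : ∀ n, sc (f n) < sc (f (n + 1)) := by
    intro n
    have := (hQf n).1
    have := (hPf n).2.2.2
    linarith
  have hmono : ∀ i j, i < j → sc (f i) < sc (f j) := by
    intro i j hij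
    induction j with
    | zero => omega
    | succ n ih =>
        rcases Nat.lt_succ_iff_lt_or_eq.1 hij with h | h
        · exact (ih h).trans (hsinc n)
        · rw [← h]; exact hsinc i
  have hinj : Function.Injective f := by
    intro a b hab
    by_contra hne
    rcases Nat.lt_or_ge a b with h | h
    · have := hmono a b h; rw [hab] at this; exact lt_irrefl _ this
    · have hba : b < a := lt_of_le_of_ne h (Ne.symm hne)
      have := hmono b a hba; rw [hab] at this; exact lt_irrefl _ this
  have hpair : ∀ i j, i < j → 4 * sc (f i) ≤ sc (f j) ∧
      2 * (et (f i) + (f i).2) ≤ et (f j) - (f j).2 ∧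
      64 * (et (f j) + (f j).2) * sc (f i) ≤ (et (f i) - (f i).2) * sc (f j) := by
    intro i j hij
    induction j with
    | zero => omega
    | succ n ih =>
        rcases Nat.lt_succ_iff_lt_or_eq.1 hij with h | h
        · obtain ⟨ih1, ih2, ih3⟩ := ih h
          obtain ⟨q1, q2, q3⟩ := hQf n
          have hSi := (hPf i).2.2.2
          have hSn := (hPf n).2.2.2
          have hSn1 := (hPf (n+1)).2.2.2
          have hrn : 0 < (f n).2 := hXr _ (hPf n).1
          have hri : 0 < (f i).2 := hXr _ (hPf i).1
          have hrn1 : 0 < (f (n+1)).2 := hXr _ (hPf (n+1)).1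
          have hgi : 0 < et (f i) - (f i).2 := by have := (hPf i).2.1; linarith
          have hgn : 0 < et (f n) - (f n).2 := by have := (hPf n).2.1; linarith
          have hsipos : 0 < sc (f i) := by linarith
          have hsnpos : 0 < sc (f n) := by linarith
          have hsn1pos : 0 < sc (f (n+1)) := by linarith
          refine ⟨by linarith, by linarith, ?_⟩
          -- 64 T_{n+1} S_i ≤ g_i S_{n+1}
          have hgT : et (f n) - (f n).2 ≤ et (f n) + (f n).2 := by linarith
          have hC : 64 * sc (f i) * (et (f n) - (f n).2) ≤
              (et (f i) - (f i).2) * sc (f n) := by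
            nlinarith [mul_le_mul_of_nonneg_left hgT
              (by linarith : (0:ℝ) ≤ 64 * sc (f i))]
          have hA : 64 * sc (f i) * (64 * (et (f (n+1)) + (f (n+1)).2) * sc (f n)) ≤
              64 * sc (f i) * ((et (f n) - (f n).2) * sc (f (n+1))) :=
            mul_le_mul_of_nonneg_left q3 (by linarith : (0:ℝ) ≤ 64 * sc (f i))
          have hE : (64 * (et (f (n+1)) + (f (n+1)).2) * sc (f i)) * (64 * sc (f n)) ≤
              ((et (f i) - (f i).2) * sc (f (n+1))) * (64 * sc (f n)) := by
            nlinarith [hA, mul_le_mul_of_nonneg_right hC hsn1pos.le,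
              mul_nonneg (mul_nonneg hgi.le hsnpos.le) hsn1pos.le]
          exact le_of_mul_le_mul_right hE (by linarith)
        · rw [← h]; exact hQf i
  refine ⟨f, fun n => (hPf n).1, hinj, ?_⟩
  intro i j k hij hjk x y z hx hy hz hcol
  have heq := collinear_det u v hcol
  have hax' := coord_bound hu 0 hx
  have hbx' := coord_bound hv 0 hx
  have hay' := coord_bound hu 0 hy
  have hby' := coord_bound hv 0 hy
  have haz' := coord_bound hu 0 hz
  have hbz' := coord_bound hv 0 hz
  simp only [sub_zero] at hax' hbx' hay' hby' haz' hbz'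
  have hik : i < k := hij.trans hjk
  obtain ⟨aij, bij, cij⟩ := hpair i j hij
  obtain ⟨ajk, bjk, cjk⟩ := hpair j k hjk
  have hPi := hPf i
  have hPj := hPf j
  have hPk := hPf k
  have hri : 0 < (f i).2 := hXr _ hPi.1
  have hrj : 0 < (f j).2 := hXr _ hPj.1
  have hrk : 0 < (f k).2 := hXr _ hPk.1
  have hSi : 1 ≤ sc (f i) := hPi.2.2.2
  have hSj : 1 ≤ sc (f j) := hPj.2.2.2
  have hSk : 1 ≤ sc (f k) := hPk.2.2.2
  have w23 : 32 * (et (f k) + (f k).2) * sc (f j) ≤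
      (et (f j) - (f j).2) * sc (f k) := by
    have hTk : 0 ≤ et (f k) + (f k).2 := by
      have := hPk.2.1; linarith
    nlinarith [mul_nonneg (mul_nonneg (by norm_num : (0:ℝ) ≤ 32) hTk)
      (by linarith : (0:ℝ) ≤ sc (f j))]
  have heq2 : ((inner ℝ y v : ℝ) - inner ℝ x v) * ((inner ℝ z u : ℝ) - inner ℝ y u)
      = ((inner ℝ z v : ℝ) - inner ℝ y v) * ((inner ℝ y u : ℝ) - inner ℝ x u) := by
    have e1 : (inner ℝ (y - x) v : ℝ) = inner ℝ y v - inner ℝ x v := inner_sub_left _ _ _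
    have e2 : (inner ℝ (z - y) u : ℝ) = inner ℝ z u - inner ℝ y u := inner_sub_left _ _ _
    have e3 : (inner ℝ (z - y) v : ℝ) = inner ℝ z v - inner ℝ y v := inner_sub_left _ _ _
    have e4 : (inner ℝ (y - x) u : ℝ) = inner ℝ y u - inner ℝ x u := inner_sub_left _ _ _
    rw [e1, e2, e3, e4] at heq
    linear_combination heq
  exact arithP (sc (f i)) (et (f i)) ((f i).2) (sc (f j)) (et (f j)) ((f j).2)
    (sc (f k)) (et (f k)) ((f k).2)
    (inner ℝ x u) (inner ℝ x v) (inner ℝ y u) (inner ℝ y v) (inner ℝ z u) (inner ℝ z v)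
    (by linarith) (by linarith) (by linarith)
    hri.le hrj.le hrk.le
    hPi.2.1 hPj.2.1 hPk.2.1
    hPi.2.2.1 hPj.2.2.1 hPk.2.2.1
    aij ajk bij bjk w23
    hax' hbx' hay' hby' haz' hbz' heq2

lemma contra_of_seq {F : Set Memb}
    (hprop : ∀ S ⊆ F, S.Infinite →
      ∃ b₁ ∈ S, ∃ b₂ ∈ S, ∃ b₃ ∈ S, b₁ ≠ b₂ ∧ b₁ ≠ b₃ ∧ b₂ ≠ b₃ ∧
        ∃ L : AffineSubspace ℝ Pl, IsLine L ∧
          (Metric.closedBall b₁.1 b₁.2 ∩ (L : Set Pl)).Nonempty ∧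
          (Metric.closedBall b₂.1 b₂.2 ∩ (L : Set Pl)).Nonempty ∧
          (Metric.closedBall b₃.1 b₃.2 ∩ (L : Set Pl)).Nonempty)
    (f : ℕ → Memb) (hfF : ∀ n, f n ∈ F) (hinj : Function.Injective f)
    (hind : ∀ i j k, i < j → j < k → ∀ x y z : Pl,
      x ∈ Metric.closedBall (f i).1 (f i).2 → y ∈ Metric.closedBall (f j).1 (f j).2 →
      z ∈ Metric.closedBall (f k).1 (f k).2 → ¬ Collinear ℝ ({x, y, z} : Set Pl)) :
    False := by
  have hSsub : Set.range f ⊆ F := by rintro m ⟨n, rfl⟩; exact hfF n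
  have hSinf : (Set.range f).Infinite := Set.infinite_range_of_injective hinj
  obtain ⟨b₁, hb₁, b₂, hb₂, b₃, hb₃, h12, h13, h23, L, hL, hP1, hP2, hP3⟩ :=
    hprop (Set.range f) hSsub hSinf
  obtain ⟨n₁, rfl⟩ := hb₁
  obtain ⟨n₂, rfl⟩ := hb₂
  obtain ⟨n₃, rfl⟩ := hb₃
  have hn12 : n₁ ≠ n₂ := fun h => h12 (by rw [h])
  have hn13 : n₁ ≠ n₃ := fun h => h13 (by rw [h])
  have hn23 : n₂ ≠ n₃ := fun h => h23 (by rw [h])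
  obtain ⟨i, j, k, hij, hjk, hPi, hPj, hPk⟩ := three_sorted hn12 hn13 hn23
    (fun n => (Metric.closedBall (f n).1 (f n).2 ∩ (L : Set Pl)).Nonempty) hP1 hP2 hP3
  obtain ⟨x, hx1, hx2⟩ := hPi
  obtain ⟨y, hy1, hy2⟩ := hPj
  obtain ⟨z, hz1, hz2⟩ := hPk
  exact hind i j k hij hjk x y z hx1 hy1 hz1 (collinear_three_of_line L hL hx2 hy2 hz2)

/-- The `(ℵ₀, 3)`-theorem for lines in the plane: if among every infinite subfamily of an
infinite family of closed discs (of positive radii) some three can be pierced by one line, then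
the whole family can be pierced by finitely many lines. -/
theorem aleph0_three_theorem_lines
    (F : Set (EuclideanSpace ℝ (Fin 2) × ℝ)) (hinf : F.Infinite)
    (hr : ∀ b ∈ F, 0 < b.2)
    (hprop : ∀ S ⊆ F, S.Infinite →
      ∃ b₁ ∈ S, ∃ b₂ ∈ S, ∃ b₃ ∈ S, b₁ ≠ b₂ ∧ b₁ ≠ b₃ ∧ b₂ ≠ b₃ ∧
        ∃ L : AffineSubspace ℝ (EuclideanSpace ℝ (Fin 2)), IsLine L ∧
          (Metric.closedBall b₁.1 b₁.2 ∩ (L : Set (EuclideanSpace ℝ (Fin 2)))).Nonempty ∧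
          (Metric.closedBall b₂.1 b₂.2 ∩ (L : Set (EuclideanSpace ℝ (Fin 2)))).Nonempty ∧
          (Metric.closedBall b₃.1 b₃.2 ∩ (L : Set (EuclideanSpace ℝ (Fin 2)))).Nonempty) :
    ∃ P : Set (AffineSubspace ℝ (EuclideanSpace ℝ (Fin 2))),
      P.Finite ∧ (∀ L ∈ P, IsLine L) ∧
      ∀ b ∈ F, ∃ L ∈ P,
        (Metric.closedBall b.1 b.2 ∩ (L : Set (EuclideanSpace ℝ (Fin 2)))).Nonempty := by
  classical
  by_contra hcon
  have hF : BigF F := fun hS => by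
    obtain ⟨P, h1, h2, h3⟩ := hS
    exact hcon ⟨P, h1, h2, h3⟩
  rcases master hF hr with ⟨X, p, u, v, hXF, hu, hv, hW⟩ | ⟨X, p, u, v, hXF, hu, hv, hW⟩ |
    ⟨X, u, v, hXF, hu, hv, hW⟩
  · obtain ⟨f, hfX, hinj, hind⟩ := caseB_seq hu hv (fun m hm => hr m (hXF hm)) hW
    exact contra_of_seq hprop f (fun n => hXF (hfX n)) hinj hind
  · obtain ⟨f, hfX, hinj, hind⟩ := caseH_seq hu hv (fun m hm => hr m (hXF hm)) hW
    exact contra_of_seq hprop f (fun n => hXF (hfX n)) hinj hind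
  · obtain ⟨f, hfX, hinj, hind⟩ := caseP_seq hu hv (fun m hm => hr m (hXF hm)) hW
    exact contra_of_seq hprop f (fun n => hXF (hfX n)) hinj hind

end
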